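/- arXiv:1207.5500 — 4 statements merged into one kernel-verified Lean document; each statement's English description precedes it below -/
import Mathlib

section
/- For the q-state Potts model with q ≥ 2, d ≥ 3, parameters m = e^B ≥ 1 and θ = 1/(e^β − 1) > 0: every BP fixed point h ∈ Δ* admits ℓ ∈ {1, …, q}, a permutation π of {1, …, q} with π(1) = 1 whenever m > 1, and a constant z > 0 such that m·F(h_{π(1)}) = z, F(h_{π(σ)}) = z for all 2 ≤ σ ≤ q, h_{π(σ)} ≥ v for 2 ≤ σ ≤ ℓ, and h_{π(σ)} ≤ v for ℓ + 1 ≤ σ ≤ q. In particular every BP fixed point takes at most three distinct coordinate values. -/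
open Finset Filter MeasureTheory

noncomputable section

/-! ## Simplex, specifications, Bethe functional -/

/-- The simplex of probability vectors on `Fin q`. -/
def simplex (q : ℕ) : Set (Fin q → ℝ) :=
  {h | (∀ σ, 0 ≤ h σ) ∧ ∑ σ, h σ = 1}

/-- `(ψ, ψ̄)` is a valid specification: `ψ` symmetric nonnegative, `ψ̄` positive. -/
def IsSpec {q : ℕ} (ψ : Fin q → Fin q → ℝ) (ψb : Fin q → ℝ) : Prop :=
  (∀ σ σ', ψ σ σ' = ψ σ' σ) ∧ (∀ σ σ', 0 ≤ ψ σ σ') ∧ ∀ σ, 0 < ψb σ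

/-- Permissivity of the interaction `ψ`. -/
def Permissive {q : ℕ} (ψ : Fin q → Fin q → ℝ) : Prop :=
  ∃ σp, ∀ σ, 0 < ψ σ σp

/-- The belief propagation (Bethe) recursion. -/
def BPmap (q d : ℕ) (ψ : Fin q → Fin q → ℝ) (ψb : Fin q → ℝ) (h : Fin q → ℝ) :
    Fin q → ℝ := fun σ =>
  ψb σ * (∑ σ', ψ σ σ' * h σ') ^ (d - 1) /
    ∑ τ, ψb τ * (∑ σ', ψ τ σ' * h σ') ^ (d - 1)

/-- The set `Δ*` of fixed points of the BP recursion in the simplex. -/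
def bpFixedPts (q d : ℕ) (ψ : Fin q → Fin q → ℝ) (ψb : Fin q → ℝ) : Set (Fin q → ℝ) :=
  {h | h ∈ simplex q ∧ BPmap q d ψ ψb h = h}

/-- The Bethe free energy functional `Φ(h)`. -/
def PhiFun (q d : ℕ) (ψ : Fin q → Fin q → ℝ) (ψb : Fin q → ℝ) (h : Fin q → ℝ) : ℝ :=
  Real.log (∑ σ, ψb σ * (∑ σ', ψ σ σ' * h σ') ^ d) -
    ((d : ℝ) / 2) * Real.log (∑ σ, ∑ σ', ψ σ σ' * h σ * h σ')

/-- The Bethe prediction `Φ = sup_{h ∈ Δ*} Φ(h)`. -/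
def BetheP (q d : ℕ) (ψ : Fin q → Fin q → ℝ) (ψb : Fin q → ℝ) : ℝ :=
  sSup (PhiFun q d ψ ψb '' bpFixedPts q d ψ ψb)

/-! ## Edge simplex and edge Bethe functional -/

/-- Symmetric probability measures on `Fin q × Fin q`. -/
def edgeSimplex (q : ℕ) : Set (Fin q → Fin q → ℝ) :=
  {h | (∀ σ σ', 0 ≤ h σ σ') ∧ (∀ σ σ', h σ σ' = h σ' σ) ∧ ∑ σ, ∑ σ', h σ σ' = 1}

/-- One-point marginal of an edge measure. -/
def marg (q : ℕ) (h : Fin q → Fin q → ℝ) : Fin q → ℝ := fun σ => ∑ σ', h σ σ'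

/-- Shannon entropy of a measure on `Fin q`. -/
def ent1 (q : ℕ) (p : Fin q → ℝ) : ℝ := -∑ σ, p σ * Real.log (p σ)

/-- Shannon entropy of a measure on `Fin q × Fin q`. -/
def ent2 (q : ℕ) (h : Fin q → Fin q → ℝ) : ℝ := -∑ σ, ∑ σ', h σ σ' * Real.log (h σ σ')

/-- The edge Bethe free energy functional `𝚽`. -/
def edgePhi (q d : ℕ) (ψ : Fin q → Fin q → ℝ) (ψb : Fin q → ℝ)
    (h : Fin q → Fin q → ℝ) : ℝ :=
  (∑ σ, marg q h σ * Real.log (ψb σ)) - ((d : ℝ) - 1) * ent1 q (marg q h) +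
    ((d : ℝ) / 2) * ((∑ σ, ∑ σ', h σ σ' * Real.log (ψ σ σ')) + ent2 q h)

/-- The embedding `g ↦ g ⊗_ψ g` of the simplex into the edge simplex. -/
def tensorPsi (q : ℕ) (ψ : Fin q → Fin q → ℝ) (g : Fin q → ℝ) : Fin q → Fin q → ℝ :=
  fun σ σ' => ψ σ σ' * g σ * g σ' / ∑ τ, ∑ τ', ψ τ τ' * g τ * g τ'

/-- All directional derivatives of `𝚽` within the edge simplex vanish at `h`. -/
def IsStationaryOn (q d : ℕ) (ψ : Fin q → Fin q → ℝ) (ψb : Fin q → ℝ)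
    (h : Fin q → Fin q → ℝ) : Prop :=
  ∀ h' ∈ edgeSimplex q,
    deriv (fun η : ℝ =>
      edgePhi q d ψ ψb fun σ σ' => h σ σ' + η * (h' σ σ' - h σ σ')) 0 = 0

/-! ## Matchings (configuration model) -/

/-- A perfect matching of `Fin N`, encoded as a fixed-point-free involution. -/
def IsMatching {N : ℕ} (m : Fin N → Fin N) : Prop :=
  Function.Involutive m ∧ ∀ i, m i ≠ i

instance {N : ℕ} : DecidablePred (IsMatching (N := N)) := fun m =>
  decidable_of_iff ((∀ i, m (m i) = i) ∧ ∀ i, m i ≠ i) Iff.rfl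

/-- The set `M_{d,n}` of perfect matchings (here of `Fin N`). -/
abbrev Matchings (N : ℕ) := {m : Fin N → Fin N // IsMatching m}

/-- Representative modulo `n` of a half-edge label. -/
def bar (d n : ℕ) (i : Fin (d * n)) : Fin n :=
  ⟨i.1 % n, Nat.mod_lt _ (Nat.pos_of_ne_zero fun h => by subst h; simpa using i.2)⟩

/-- Partition function of the factor model determined by a matching `γ ∈ M_{d,n}`. -/
def Zmatch (q d n : ℕ) (ψ : Fin q → Fin q → ℝ) (ψb : Fin q → ℝ)
    (γ : Matchings (d * n)) : ℝ :=
  ∑ σ : Fin n → Fin q,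
    (∏ v, ψb (σ v)) *
      ∏ i ∈ univ.filter fun i => i < γ.1 i, ψ (σ (bar d n i)) (σ (bar d n (γ.1 i)))

/-- Expectation under the uniform measure on matchings (configuration model). -/
def Ecm (d n : ℕ) (f : Matchings (d * n) → ℝ) : ℝ :=
  (∑ γ : Matchings (d * n), f γ) / (Fintype.card (Matchings (d * n)) : ℝ)

/-- The free energy `φ^cm_{d,n}` of the configuration model. -/
def phiCm (q d n : ℕ) (ψ : Fin q → Fin q → ℝ) (ψb : Fin q → ℝ) : ℝ :=
  (n : ℝ)⁻¹ * Ecm d n fun γ => Real.log (Zmatch q d n ψ ψb γ)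

/-- Probability of an event under the uniform measure on matchings. -/
def Pcm (d n : ℕ) (p : Matchings (d * n) → Prop) : ℝ :=
  (Nat.card {γ : Matchings (d * n) // p γ} : ℝ) / (Fintype.card (Matchings (d * n)) : ℝ)

/-! ## Multigraphs via adjacency counts, tree-like vertices, `ζ_t` -/

/-- Degree in a multigraph given by adjacency counts (a self-loop counts twice,
via the convention `A v v = 2 · #loops`). -/
def mgDeg {V : Type} [Fintype V] (A : V → V → ℕ) (u : V) : ℕ := ∑ w, A u w

/-- The simple graph underlying a multigraph (loops and multiplicities dropped). -/
def mgGraph {V : Type} (A : V → V → ℕ) : SimpleGraph V where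
  Adj u w := u ≠ w ∧ (A u w ≠ 0 ∨ A w u ≠ 0)
  symm := ⟨fun u w h => ⟨h.1.symm, h.2.symm⟩⟩
  loopless := ⟨fun u h => h.1 rfl⟩

/-- The radius-`t` ball around `v`. -/
def mball {V : Type} [Fintype V] (A : V → V → ℕ) (v : V) (t : ℕ) : Finset V := by
  classical exact univ.filter fun u => (mgGraph A).Reachable v u ∧ (mgGraph A).dist v u ≤ t

/-- `v` is `t`-tree-like: the radius-`t` ball around `v` is isomorphic to the depth-`t`
ball of the `d`-regular tree; concretely, every vertex at distance `< t` has degree `d`,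
the ball carries no self-loops or multi-edges, and the (connected) ball has exactly
`|ball| - 1` edges, i.e. contains no cycle. -/
def treeLike (d : ℕ) {V : Type} [Fintype V] (A : V → V → ℕ) (t : ℕ) (v : V) : Prop :=
  (∀ u, (mgGraph A).Reachable v u → (mgGraph A).dist v u < t → mgDeg A u = d) ∧
  (∀ u ∈ mball A v t, A u u = 0) ∧
  (∀ u ∈ mball A v t, ∀ w ∈ mball A v t, A u w ≤ 1) ∧
  (∑ u ∈ mball A v t, ∑ w ∈ mball A v t, A u w) = 2 * ((mball A v t).card - 1)

/-- Fraction `ζ_t` of vertices whose radius-`t` ball is not `d`-regular-tree-like. -/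
def zeta (d : ℕ) {V : Type} [Fintype V] (A : V → V → ℕ) (t : ℕ) : ℝ :=
  (Nat.card {v : V // ¬ treeLike d A t v} : ℝ) / (Fintype.card V : ℝ)

/-- Adjacency counts of the multigraph `G[γ]` determined by a matching. -/
def matchAdj {d n : ℕ} (γ : Matchings (d * n)) (u w : Fin n) : ℕ :=
  (univ.filter fun i : Fin (d * n) => bar d n i = u ∧ bar d n (γ.1 i) = w).card

/-- Adjacency counts of a simple graph. -/
def sgAdj {V : Type} [Fintype V] (G : SimpleGraph V) (u w : V) : ℕ := by
  classical exact if G.Adj u w then 1 else 0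

/-! ## Partition functions of graphs and multigraphs -/

/-- The Gibbs weight of a configuration on a simple graph. -/
def graphWeight (q : ℕ) {V : Type} [Fintype V] [LinearOrder V] (ψ : Fin q → Fin q → ℝ)
    (ψb : Fin q → ℝ) (G : SimpleGraph V) (σ : V → Fin q) : ℝ := by
  classical exact
    (∏ v, ψb (σ v)) *
      ∏ p ∈ univ.filter fun p : V × V => p.1 < p.2 ∧ G.Adj p.1 p.2, ψ (σ p.1) (σ p.2)

/-- Partition function of the factor model on a simple graph. -/
def ZG (q : ℕ) {V : Type} [Fintype V] [LinearOrder V] (ψ : Fin q → Fin q → ℝ)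
    (ψb : Fin q → ℝ) (G : SimpleGraph V) : ℝ :=
  ∑ σ : V → Fin q, graphWeight q ψ ψb G σ

/-- The Gibbs weight of a configuration on a multigraph. -/
def mgWeight (q : ℕ) {V : Type} [Fintype V] [LinearOrder V] (ψ : Fin q → Fin q → ℝ)
    (ψb : Fin q → ℝ) (A : V → V → ℕ) (σ : V → Fin q) : ℝ :=
  (∏ v, ψb (σ v)) *
    (∏ p ∈ univ.filter fun p : V × V => p.1 < p.2, ψ (σ p.1) (σ p.2) ^ A p.1 p.2) *
    ∏ v, ψ (σ v) (σ v) ^ (A v v / 2)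

/-- Partition function of the factor model on a multigraph. -/
def Zmg (q : ℕ) {V : Type} [Fintype V] [LinearOrder V] (ψ : Fin q → Fin q → ℝ)
    (ψb : Fin q → ℝ) (A : V → V → ℕ) : ℝ :=
  ∑ σ : V → Fin q, mgWeight q ψ ψb A σ

/-- Remove a vertex from a multigraph (delete all incident edges). -/
def removeVx {V : Type} [DecidableEq V] (A : V → V → ℕ) (v : V) : V → V → ℕ :=
  fun i j => if i = v ∨ j = v then 0 else A i j

/-- Law of the spins of the (enumerated) neighbors of `v` under the factor model
on the multigraph with `v` removed. -/
def nuMinus (q d N : ℕ) (ψ : Fin q → Fin q → ℝ) (ψb : Fin q → ℝ)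
    (A : Fin N → Fin N → ℕ) (v : Fin N) (vs : Fin d → Fin N) (τ : Fin d → Fin q) : ℝ :=
  (∑ᶠ (σ : Fin N → Fin q) (_ : ∀ j, σ (vs j) = τ j), mgWeight q ψ ψb (removeVx A v) σ) /
    Zmg q ψ ψb (removeVx A v)

/-- Total variation distance of probability vectors. -/
def dTV {α : Type} [Fintype α] (p r : α → ℝ) : ℝ := (∑ x, |p x - r x|) / 2

/-- The mixture `ρ̄` of product measures associated to a measure `ρ` on `Δ^d`. -/
def rhoBar (q d : ℕ) (ρ : Measure (Fin d → Fin q → ℝ)) (τ : Fin d → Fin q) : ℝ :=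
  ∫ h, (∏ j, h j (τ j)) ∂ρ

/-- `x` lies in the (topological) support of the measure `ρ`. -/
def inSupp {α : Type*} [TopologicalSpace α] {m : MeasurableSpace α}
    (ρ : Measure α) (x : α) : Prop :=
  ∀ U : Set α, IsOpen U → x ∈ U → 0 < ρ U

/-- Symmetric multigraph adjacency data with an even number of half-loops. -/
def IsMultigraphAdj {V : Type} (A : V → V → ℕ) : Prop :=
  (∀ u w, A u w = A w u) ∧ ∀ v, Even (A v v)

/-- `d`-regularity of a multigraph. -/
def IsRegAdj (d : ℕ) {V : Type} [Fintype V] (A : V → V → ℕ) : Prop :=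
  ∀ v, mgDeg A v = d

/-! ## The functionals `Ψ^vx`, `Ψ^e`, `Ψ^{e,sym}`, `Ψ^sym` -/

def PsiVx (q d : ℕ) (ψ : Fin q → Fin q → ℝ) (ψb : Fin q → ℝ)
    (h : Fin d → Fin q → ℝ) : ℝ :=
  ∑ σ, ψb σ * ∏ j, ∑ σ', ψ σ σ' * h j σ'

def PsiE (q d : ℕ) (ψ : Fin q → Fin q → ℝ) (h : Fin d → Fin q → ℝ) : ℝ :=
  ∏ j : Fin (d / 2),
    ∑ σ, ∑ σ', ψ σ σ' * h ⟨2 * j.1, by have := j.2; omega⟩ σ *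
      h ⟨2 * j.1 + 1, by have := j.2; omega⟩ σ'

def PsiEsym (q d : ℕ) (ψ : Fin q → Fin q → ℝ) (h : Fin d → Fin q → ℝ) : ℝ :=
  (∑ π : Equiv.Perm (Fin d), PsiE q d ψ fun j => h (π j)) / (Nat.factorial d : ℝ)

def PsiSym (q d : ℕ) (ψ : Fin q → Fin q → ℝ) (ψb : Fin q → ℝ)
    (h : Fin d → Fin q → ℝ) : ℝ :=
  PsiVx q d ψ ψb h / PsiEsym q d ψ h

/-! ## Potts model -/

/-- Potts pair interaction. -/
def pottsPsi (q : ℕ) (β : ℝ) : Fin q → Fin q → ℝ :=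
  fun σ σ' => Real.exp (if σ = σ' then β else 0)

/-- Potts magnetic field (favoring the spin with index `0`). -/
def pottsPsib (q : ℕ) (B : ℝ) : Fin q → ℝ :=
  fun σ => Real.exp (if σ.1 = 0 then B else 0)

/-- The one-parameter family `h_b ∈ Δ̄` of biased measures. -/
def pottsHb (q : ℕ) (b : ℝ) : Fin q → ℝ :=
  fun σ => if σ.1 = 0 then (1 + ((q : ℝ) - 1) * b) / q else (1 - b) / q

/-- The univariate Bethe recursion `bp` on the bias parameter `b`. -/
def pottsBp (q d : ℕ) (β B : ℝ) (b : ℝ) : ℝ :=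
  ((q : ℝ) * (∑ σ ∈ univ.filter fun σ : Fin q => σ.1 = 0,
      BPmap q d (pottsPsi q β) (pottsPsib q B) (pottsHb q b) σ) - 1) / ((q : ℝ) - 1)

/-- `b_f`, the limit of the (monotone) BP iterates started from `b = 0`. -/
def bLo (q d : ℕ) (β B : ℝ) : ℝ := ⨆ t : ℕ, (pottsBp q d β B)^[t] 0

/-- `b_m`, the limit of the (monotone) BP iterates started from `b = 1`. -/
def bHi (q d : ℕ) (β B : ℝ) : ℝ := ⨅ t : ℕ, (pottsBp q d β B)^[t] 1

/-- The function `F(x) = x⁻¹ (x/θ + 1)^{d-1}`. -/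
def Fpotts (d : ℕ) (θ x : ℝ) : ℝ := x⁻¹ * (x / θ + 1) ^ (d - 1)

/-! ## Exchangeable pairs and the symmetric correlation coefficient -/

def eMean (q : ℕ) (h φ : Fin q → Fin q → ℝ) : ℝ := ∑ σ, ∑ σ', h σ σ' * φ σ σ'

def eVar (q : ℕ) (h φ : Fin q → Fin q → ℝ) : ℝ :=
  ∑ σ, ∑ σ', h σ σ' * (φ σ σ' - eMean q h φ) ^ 2

def eCondVar (q : ℕ) (h φ : Fin q → Fin q → ℝ) : ℝ :=
  ∑ σ, marg q h σ * ((∑ σ', h σ σ' * φ σ σ') / marg q h σ - eMean q h φ) ^ 2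

/-- The symmetric correlation coefficient `ρ_XY` of an exchangeable pair with law `h`. -/
def rhoXY (q : ℕ) (h : Fin q → Fin q → ℝ) : ℝ :=
  sSup {r | ∃ φ : Fin q → Fin q → ℝ, (∀ σ σ', φ σ σ' = φ σ' σ) ∧ 0 < eVar q h φ ∧
    r = eCondVar q h φ / eVar q h φ}

/-! ## Empirical measures, misc -/

/-- The edge empirical measure `L^e(σ, γ)`. -/
def edgeEmp (q d n : ℕ) (γ : Matchings (d * n)) (σ : Fin n → Fin q) :
    Fin q → Fin q → ℝ :=
  fun τ τ' =>
    ((univ.filter fun i : Fin (d * n) =>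
        σ (bar d n i) = τ ∧ σ (bar d n (γ.1 i)) = τ').card : ℝ) / ((n : ℝ) * d)

/-- The vertex empirical (spin) distribution `L^vx(σ)`. -/
def empDist (q n : ℕ) (σ : Fin n → Fin q) : Fin q → ℝ :=
  fun τ => (Nat.card {i : Fin n // σ i = τ} : ℝ) / n

/-- Probability of an event under a weight function. -/
def probOf {α : Type*} (P : α → ℝ) (p : α → Prop) : ℝ := ∑ᶠ (x : α) (_ : p x), P x

/-- Probability of an event under the uniform measure on simple `d`-regular graphs. -/
def Preg (d n : ℕ) (p : SimpleGraph (Fin n) → Prop) : ℝ :=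
  (Nat.card {G : SimpleGraph (Fin n) // (∀ v, mgDeg (sgAdj G) v = d) ∧ p G} : ℝ) /
    (Nat.card {G : SimpleGraph (Fin n) // ∀ v, mgDeg (sgAdj G) v = d} : ℝ)

/-- Adjoin to `G` one new vertex, adjacent to the vertices of `S`. -/
def addVertex (k : ℕ) (G : SimpleGraph (Fin k)) (S : Finset (Fin k)) :
    SimpleGraph (Fin (k + 1)) :=
  SimpleGraph.fromRel fun a b =>
    (∃ u w : Fin k, a = u.castSucc ∧ b = w.castSucc ∧ G.Adj u w) ∨
      (a = Fin.last k ∧ ∃ w ∈ S, b = w.castSucc)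

/-- Strict local maximizer of the edge Bethe functional on the edge simplex. -/
def strictLocalMaxOnEdge (q d : ℕ) (ψ : Fin q → Fin q → ℝ) (ψb : Fin q → ℝ)
    (H : Fin q → Fin q → ℝ) : Prop :=
  ∃ ε : ℝ, 0 < ε ∧ ∀ h' ∈ edgeSimplex q, h' ≠ H → dist h' H < ε →
    edgePhi q d ψ ψb h' < edgePhi q d ψ ψb H

/-- Strictly negative second variation of the edge Bethe functional at `H`, in every
nonzero symmetric direction of total mass zero. -/
def negSecondVar (q d : ℕ) (ψ : Fin q → Fin q → ℝ) (ψb : Fin q → ℝ)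
    (H : Fin q → Fin q → ℝ) : Prop :=
  ∀ δ : Fin q → Fin q → ℝ, δ ≠ 0 → (∀ σ σ', δ σ σ' = δ σ' σ) →
    (∑ σ, ∑ σ', δ σ σ') = 0 →
    iteratedDeriv 2 (fun η : ℝ => edgePhi q d ψ ψb fun σ σ' => H σ σ' + η * δ σ σ') 0 < 0

private lemma Fpotts_deriv {d : ℕ} (hd : 3 ≤ d) {θ : ℝ} (hθ : 0 < θ) {x : ℝ} (hx : 0 < x) :
    HasDerivAt (Fpotts d θ)
      ((x ^ 2)⁻¹ * (x / θ + 1) ^ (d - 2) * (((d : ℝ) - 2) * (x / θ) - 1)) x := by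
  have h1 : HasDerivAt (fun y : ℝ => y⁻¹) (-(x ^ 2)⁻¹) x := hasDerivAt_inv hx.ne'
  have h2 : HasDerivAt (fun y : ℝ => y / θ + 1) (1 / θ) x := by
    simpa using ((hasDerivAt_id x).div_const θ).add_const 1
  have h3 := h2.pow (d - 1)
  have h4 := h1.mul h3
  have hcast : ((d - 1 : ℕ) : ℝ) = (d : ℝ) - 1 := by
    rw [Nat.cast_sub (by omega)]; norm_num
  have hde : d - 1 - 1 = d - 2 := by omega
  have hd1 : d - 1 = (d - 2) + 1 := by omega
  refine HasDerivAt.congr_deriv h4 ?_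
  rw [hcast, hde, hd1, Pi.pow_apply, pow_succ]
  have hθne : θ ≠ 0 := hθ.ne'
  beta_reduce
  simp only [div_add_one hθne, div_pow]
  field_simp
  ring

private lemma Fpotts_strictAntiOn {d : ℕ} (hd : 3 ≤ d) {θ : ℝ} (hθ : 0 < θ) :
    StrictAntiOn (Fpotts d θ) (Set.Ioc 0 (θ / ((d : ℝ) - 2))) := by
  have hd2 : (0 : ℝ) < (d : ℝ) - 2 := by
    have : (3 : ℝ) ≤ (d : ℝ) := by exact_mod_cast hd
    linarith
  apply strictAntiOn_of_deriv_neg (convex_Ioc _ _)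
  · apply ContinuousOn.mul
    · exact ContinuousOn.inv₀ continuousOn_id fun x hx => (hx.1).ne'
    · exact (Continuous.pow (by continuity) _).continuousOn
  · intro x hx
    rw [interior_Ioc] at hx
    obtain ⟨hx0, hxv⟩ := hx
    rw [(Fpotts_deriv hd hθ hx0).deriv]
    have hA : 0 < x / θ + 1 := by positivity
    have hkey : ((d : ℝ) - 2) * (x / θ) - 1 < 0 := by
      have h5 : x / θ < 1 / ((d : ℝ) - 2) := by
        rw [div_lt_div_iff₀ hθ hd2]
        rw [lt_div_iff₀ hd2] at hxv
        linarith
      have h6 := mul_lt_mul_of_pos_left h5 hd2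
      rw [mul_one_div, div_self hd2.ne'] at h6
      linarith
    have h1 : 0 < (x ^ 2)⁻¹ * (x / θ + 1) ^ (d - 2) := by positivity
    nlinarith

private lemma Fpotts_strictMonoOn {d : ℕ} (hd : 3 ≤ d) {θ : ℝ} (hθ : 0 < θ) :
    StrictMonoOn (Fpotts d θ) (Set.Ici (θ / ((d : ℝ) - 2))) := by
  have hd2 : (0 : ℝ) < (d : ℝ) - 2 := by
    have : (3 : ℝ) ≤ (d : ℝ) := by exact_mod_cast hd
    linarith
  have hv : 0 < θ / ((d : ℝ) - 2) := by positivity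
  apply strictMonoOn_of_deriv_pos (convex_Ici _)
  · apply ContinuousOn.mul
    · exact ContinuousOn.inv₀ continuousOn_id fun x hx => (lt_of_lt_of_le hv hx).ne'
    · exact (Continuous.pow (by continuity) _).continuousOn
  · intro x hx
    rw [interior_Ici] at hx
    have hx0 : 0 < x := lt_trans hv hx
    rw [(Fpotts_deriv hd hθ hx0).deriv]
    have hkey : 0 < ((d : ℝ) - 2) * (x / θ) - 1 := by
      have h5 : 1 / ((d : ℝ) - 2) < x / θ := by
        rw [div_lt_div_iff₀ hd2 hθ]
        rw [Set.mem_Ioi, div_lt_iff₀ hd2] at hx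
        linarith
      have h6 := mul_lt_mul_of_pos_left h5 hd2
      rw [mul_one_div, div_self hd2.ne'] at h6
      linarith
    have h1 : 0 < (x ^ 2)⁻¹ * (x / θ + 1) ^ (d - 2) := by positivity
    nlinarith

private lemma Fpotts_three {d : ℕ} (hd : 3 ≤ d) {θ : ℝ} (hθ : 0 < θ) {a b c : ℝ}
    (ha : 0 < a) (hb : 0 < b) (hc : 0 < c)
    (hab : Fpotts d θ a = Fpotts d θ b) (hac : Fpotts d θ a = Fpotts d θ c) :
    a = b ∨ a = c ∨ b = c := by
  set v := θ / ((d : ℝ) - 2) with hv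
  have inj1 : ∀ u1 u2 : ℝ, 0 < u1 → u1 ≤ v → 0 < u2 → u2 ≤ v →
      Fpotts d θ u1 = Fpotts d θ u2 → u1 = u2 := fun u1 u2 p1 l1 p2 l2 e =>
    (Fpotts_strictAntiOn hd hθ).injOn ⟨p1, l1⟩ ⟨p2, l2⟩ e
  have inj2 : ∀ u1 u2 : ℝ, v ≤ u1 → v ≤ u2 →
      Fpotts d θ u1 = Fpotts d θ u2 → u1 = u2 := fun u1 u2 l1 l2 e =>
    (Fpotts_strictMonoOn hd hθ).injOn l1 l2 e
  rcases le_total a v with h1 | h1 <;> rcases le_total b v with h2 | h2 <;>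
    rcases le_total c v with h3 | h3
  · exact Or.inl (inj1 a b ha h1 hb h2 hab)
  · exact Or.inl (inj1 a b ha h1 hb h2 hab)
  · exact Or.inr (Or.inl (inj1 a c ha h1 hc h3 hac))
  · exact Or.inr (Or.inr (inj2 b c h2 h3 (hab ▸ hac)))
  · exact Or.inr (Or.inr (inj1 b c hb h2 hc h3 (hab ▸ hac)))
  · exact Or.inr (Or.inl (inj2 a c h1 h3 hac))
  · exact Or.inl (inj2 a b h1 h2 hab)
  · exact Or.inl (inj2 a b h1 h2 hab)

private lemma potts_sum {q : ℕ} (β : ℝ) (h : Fin q → ℝ) (hsum : ∑ σ, h σ = 1) (σ : Fin q) :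
    ∑ σ', pottsPsi q β σ σ' * h σ' = (Real.exp β - 1) * h σ + 1 := by
  have key : ∀ σ' : Fin q, pottsPsi q β σ σ' * h σ'
      = (if σ = σ' then (Real.exp β - 1) * h σ' else 0) + h σ' := by
    intro σ'
    unfold pottsPsi
    by_cases e : σ = σ'
    · rw [if_pos e, if_pos e]; ring
    · rw [if_neg e, if_neg e, Real.exp_zero]; ring
  rw [Finset.sum_congr rfl fun σ' _ => key σ', Finset.sum_add_distrib,
    Finset.sum_ite_eq, hsum]
  simp

/-- classification of Potts BP fixed points: up to a permutation (fixing
spin `1` when `m > 1`), the coordinates satisfy `m F(h_{π(1)}) = z`, `F(h_{π(σ)}) = z` for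
`σ ≠ 1`, with the coordinates `2 ≤ σ ≤ ℓ` at least `v` and the rest at most `v`; in
particular a fixed point takes at most three distinct values. -/
theorem potts_fixed_point_classification
    (q d : ℕ) (hq : 2 ≤ q) (hd : 3 ≤ d) (β B : ℝ) (hβ : 0 < β) (hB : 0 ≤ B) :
    ∀ h ∈ bpFixedPts q d (pottsPsi q β) (pottsPsib q B),
      (∃ ℓ : ℕ, 1 ≤ ℓ ∧ ℓ ≤ q ∧ ∃ π : Equiv.Perm (Fin q), ∃ z : ℝ, 0 < z ∧
        (0 < B → π ⟨0, by omega⟩ = ⟨0, by omega⟩) ∧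
        Real.exp B * Fpotts d (1 / (Real.exp β - 1)) (h (π ⟨0, by omega⟩)) = z ∧
        (∀ σ : Fin q, σ.1 ≠ 0 → Fpotts d (1 / (Real.exp β - 1)) (h (π σ)) = z) ∧
        (∀ σ : Fin q, 1 ≤ σ.1 → σ.1 ≤ ℓ - 1 →
          (1 / (Real.exp β - 1)) / ((d : ℝ) - 2) ≤ h (π σ)) ∧
        (∀ σ : Fin q, ℓ ≤ σ.1 →
          h (π σ) ≤ (1 / (Real.exp β - 1)) / ((d : ℝ) - 2))) ∧
      ∃ x y w : ℝ, ∀ σ, h σ = x ∨ h σ = y ∨ h σ = w := by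
  classical
  intro h hh
  obtain ⟨⟨hpos, hsum⟩, hfix⟩ := hh
  set θ : ℝ := 1 / (Real.exp β - 1) with hθdef
  have heβ : 1 < Real.exp β := by
    rw [show (1:ℝ) = Real.exp 0 by simp]; exact Real.exp_lt_exp.mpr hβ
  have hθ : 0 < θ := by
    have h1 : 0 < Real.exp β - 1 := by linarith
    rw [hθdef]; positivity
  set z0 : Fin q := ⟨0, by omega⟩ with hz0
  set ψ := pottsPsi q β
  set ψb := pottsPsib q B
  set S : Fin q → ℝ := fun σ => (Real.exp β - 1) * h σ + 1 with hS
  have hSpos : ∀ σ, 0 < S σ := fun σ => by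
    have := hpos σ
    show 0 < (Real.exp β - 1) * h σ + 1
    nlinarith
  have hψbpos : ∀ σ, 0 < ψb σ := fun σ => Real.exp_pos _
  set Z : ℝ := ∑ τ, ψb τ * (∑ σ', ψ τ σ' * h σ') ^ (d - 1) with hZdef
  have hZeq : Z = ∑ τ, ψb τ * S τ ^ (d - 1) := by
    refine Finset.sum_congr rfl fun τ _ => ?_
    rw [potts_sum β h hsum τ]
  have hZpos : 0 < Z := by
    rw [hZeq]
    exact Finset.sum_pos (fun τ _ => mul_pos (hψbpos τ) (pow_pos (hSpos τ) _))
      ⟨z0, Finset.mem_univ _⟩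
  have hfixσ : ∀ σ, ψb σ * S σ ^ (d - 1) = h σ * Z := by
    intro σ
    have := congrFun hfix σ
    simp only [BPmap] at this
    rw [← hZdef, potts_sum β h hsum σ, div_eq_iff hZpos.ne'] at this
    exact this
  have hhpos : ∀ σ, 0 < h σ := by
    intro σ
    have h1 : 0 < ψb σ * S σ ^ (d - 1) := by
      have := hSpos σ; have := hψbpos σ; positivity
    rw [hfixσ σ] at h1
    nlinarith [hZpos]
  have hhdiv : ∀ σ, h σ / θ + 1 = S σ := by
    intro σ
    show h σ / (1 / (Real.exp β - 1)) + 1 = (Real.exp β - 1) * h σ + 1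
    have hne : Real.exp β - 1 ≠ 0 := by linarith
    field_simp
  have hFz : ∀ σ, ψb σ * Fpotts d θ (h σ) = Z := by
    intro σ
    unfold Fpotts
    rw [hhdiv σ]
    rw [show ψb σ * ((h σ)⁻¹ * S σ ^ (d - 1)) = (h σ)⁻¹ * (ψb σ * S σ ^ (d-1)) by ring,
      hfixσ σ, ← mul_assoc, inv_mul_cancel₀ (hhpos σ).ne', one_mul]
  -- the sorting permutation
  set v : ℝ := θ / ((d : ℝ) - 2) with hv
  set g : Fin q → ℕ := fun σ => if σ = z0 then 0 else if v ≤ h σ then 1 else 2 with hg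
  set π : Equiv.Perm (Fin q) := Tuple.sort g with hπ
  have hmono : Monotone (g ∘ π) := Tuple.monotone_sort g
  have hπ0 : π z0 = z0 := by
    have h1 : g (π (π.symm z0)) = 0 := by rw [Equiv.apply_symm_apply]; simp [hg]
    have h2 : g (π z0) ≤ g (π (π.symm z0)) := by
      apply hmono
      exact Fin.mk_le_mk.mpr (Nat.zero_le _)
    rw [h1, Nat.le_zero] at h2
    by_contra hne
    have : g (π z0) ≠ 0 := by
      simp only [hg]
      rw [if_neg hne]
      split <;> omega
    exact this h2
  have hπne : ∀ σ : Fin q, σ.1 ≠ 0 → π σ ≠ z0 := by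
    intro σ hσ hc
    rw [← hπ0] at hc
    have := π.injective hc
    apply hσ
    rw [this]
  set ℓ : ℕ := Fintype.card {i // (g ∘ π) i ≤ 1} with hℓ
  have hmem : ∀ j : Fin q, j.1 < ℓ ↔ g (π j) ≤ 1 := fun j =>
    by rw [hℓ, Fintype.card_subtype]; exact Tuple.lt_card_le_iff_apply_le_of_monotone (j := j) (a := 1) hmono
  have hℓ1 : 1 ≤ ℓ := by
    have : (π.symm z0).1 < ℓ := by
      rw [hmem]
      simp [Equiv.apply_symm_apply, hg]
    omega
  have hℓq : ℓ ≤ q := by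
    rw [hℓ]
    calc Fintype.card {i // (g ∘ π) i ≤ 1} ≤ Fintype.card (Fin q) :=
          Fintype.card_subtype_le _
      _ = q := Fintype.card_fin q
  refine ⟨⟨ℓ, hℓ1, hℓq, π, Z, hZpos, fun _ => hπ0, ?_, ?_, ?_, ?_⟩, ?_⟩
  · rw [hπ0]
    have := hFz z0
    rwa [show ψb z0 = Real.exp B by simp [ψb, pottsPsib, hz0]] at this
  · intro σ hσ
    have := hFz (π σ)
    rwa [show ψb (π σ) = 1 by
      have : (π σ).1 ≠ 0 := fun hc => hπne σ hσ (Fin.ext hc)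
      simp [ψb, pottsPsib, this], one_mul] at this
  · intro σ hσ1 hσ2
    have hlt : σ.1 < ℓ := by omega
    rw [hmem] at hlt
    have hne : π σ ≠ z0 := hπne σ (by omega)
    simp only [hg, if_neg hne] at hlt
    by_contra hc
    rw [if_neg (by linarith [lt_of_not_ge hc])] at hlt
    omega
  · intro σ hσ
    have hge : ¬ σ.1 < ℓ := by omega
    rw [hmem] at hge
    have hne : π σ ≠ z0 := hπne σ (by omega)
    simp only [hg, if_neg hne] at hge
    by_contra hc
    rw [if_pos (by linarith [lt_of_not_ge hc])] at hge
    omega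
  · -- at most three values
    set one : Fin q := ⟨1, by omega⟩ with hone
    have hFeq : ∀ σ : Fin q, σ ≠ z0 → Fpotts d θ (h σ) = Z / 1 := by
      intro σ hσ
      have := hFz σ
      have hσ0 : σ.1 ≠ 0 := fun hc => hσ (Fin.ext hc)
      rw [show ψb σ = 1 by simp [ψb, pottsPsib, hσ0], one_mul] at this
      rw [this]; ring
    by_cases hw : ∃ τ, h τ ≠ h z0 ∧ h τ ≠ h one
    · obtain ⟨τ, hτx, hτy⟩ := hw
      refine ⟨h z0, h one, h τ, fun σ => ?_⟩
      by_contra hc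
      push_neg at hc
      obtain ⟨hc1, hc2, hc3⟩ := hc
      have hσz : σ ≠ z0 := fun e => hc1 (by rw [e])
      have hτz : τ ≠ z0 := fun e => hτx (by rw [e])
      have honez : one ≠ z0 := by
        intro e
        have := congrArg Fin.val e
        simp [hone, hz0] at this
      have r := Fpotts_three hd hθ (hhpos σ) (hhpos one) (hhpos τ)
        ((hFeq σ hσz).trans (hFeq one honez).symm)
        ((hFeq σ hσz).trans (hFeq τ hτz).symm)
      rcases r with r | r | r
      · exact hc2 r
      · exact hc3 r
      · exact hτy r.symm
    · push_neg at hw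
      exact ⟨h z0, h one, h one, fun σ => by
        rcases eq_or_ne (h σ) (h z0) with e | e
        · exact Or.inl e
        · exact Or.inr (Or.inl (hw σ e))⟩


end
end

section
/- For the q-state Potts model with q ≥ 2, d ≥ 3, θ = 1/(e^β − 1) > 0, fix ℓ with 2 ≤ ℓ ≤ q and suppose qv < 1. Then there exists m_ℓ(θ) > 1 such that for every m = e^B ∈ [1, m_ℓ(θ)] and each sign s ∈ {+, −} there is a BP fixed point h ∈ Δ* and a constant z > 0 with: m·F(h_1) = z, where h_1 ≥ v if s = + and h_1 ≤ v if s = −; exactly ℓ − 1 of the coordinates h_σ with σ ≥ 2 equal a common value p_+ ∈ [v, 1] with F(p_+) = z; and the remaining q − ℓ of these coordinates equal a common value p_− ∈ (0, v] with F(p_−) = z (an ℓ_s-type solution). -/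
open Finset Filter MeasureTheory

noncomputable section

section FProps
variable {d : ℕ} {θ : ℝ} (hd : 3 ≤ d) (hθ : 0 < θ)
include hd hθ

lemma F_hasDerivAt {x : ℝ} (hx : 0 < x) :
    HasDerivAt (Fpotts d θ)
      ((x ^ 2)⁻¹ * (x / θ + 1) ^ (d - 2) * (((d : ℝ) - 2) * x - θ) * θ⁻¹) x := by
  obtain ⟨k, rfl⟩ : ∃ k, d = k + 3 := ⟨d - 3, by omega⟩
  have h1 : HasDerivAt (fun y : ℝ => y⁻¹) (-(x ^ 2)⁻¹) x := hasDerivAt_inv hx.ne'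
  have h2 : HasDerivAt (fun y : ℝ => (y / θ + 1) ^ (k + 2))
      (((k : ℝ) + 2) * (x / θ + 1) ^ (k + 1) * (1 / θ)) x := by
    have := (((hasDerivAt_id x).div_const θ).add_const 1).fun_pow (k + 2)
    simpa using this
  have h3 := h1.fun_mul h2
  have hFeq : Fpotts (k + 3) θ = fun y : ℝ => y⁻¹ * (y / θ + 1) ^ (k + 2) := by
    funext y; simp [Fpotts]
  rw [hFeq]
  refine h3.congr_deriv ?_
  have hx2 : (x : ℝ) ≠ 0 := hx.ne'
  have hθ' : θ ≠ 0 := hθ.ne'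
  push_cast [show k + 3 - 2 = k + 1 from rfl]
  have e1 : (x / θ + 1) ^ (k + 2) = (x / θ + 1) ^ (k + 1) * (x / θ + 1) := by ring
  rw [e1]
  field_simp
  ring

omit hd in
lemma F_pos {x : ℝ} (hx : 0 < x) : 0 < Fpotts d θ x := by
  have : (0:ℝ) < x / θ + 1 := by positivity
  exact mul_pos (inv_pos.2 hx) (pow_pos this _)

omit hd in
lemma F_ge_inv {x : ℝ} (hx : 0 < x) : x⁻¹ ≤ Fpotts d θ x := by
  have h1 : (1:ℝ) ≤ x / θ + 1 := by
    have : 0 ≤ x / θ := by positivity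
    linarith
  have h2 : (1:ℝ) ≤ (x / θ + 1) ^ (d-1) := one_le_pow₀ h1
  unfold Fpotts
  nlinarith [inv_pos.2 hx]

lemma F_contOn : ContinuousOn (Fpotts d θ) (Set.Ioi 0) :=
  fun x hx => ((F_hasDerivAt hd hθ hx).continuousAt).continuousWithinAt

omit hθ in
lemma hd2R : (0:ℝ) < (d:ℝ) - 2 := by
  have : (3:ℝ) ≤ d := by exact_mod_cast hd
  linarith

lemma F_strictMonoOn : StrictMonoOn (Fpotts d θ) (Set.Icc (θ / ((d:ℝ) - 2)) 1) := by
  have hv : 0 < θ / ((d:ℝ) - 2) := div_pos hθ (hd2R hd)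
  apply strictMonoOn_of_deriv_pos (convex_Icc _ _)
  · exact (F_contOn hd hθ).mono (fun x hx => lt_of_lt_of_le hv hx.1)
  · intro x hx
    rw [interior_Icc] at hx
    have hx0 : 0 < x := lt_trans hv hx.1
    rw [(F_hasDerivAt hd hθ hx0).deriv]
    have h1 : 0 < ((d:ℝ) - 2) * x - θ := by
      have := (div_lt_iff₀ (hd2R hd)).1 hx.1
      linarith [mul_comm ((d:ℝ) - 2) x]
    have h2 : (0:ℝ) < x / θ + 1 := by positivity
    positivity

lemma F_strictAntiOn {c : ℝ} (hc : 0 < c) :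
    StrictAntiOn (Fpotts d θ) (Set.Icc c (θ / ((d:ℝ) - 2))) := by
  apply strictAntiOn_of_deriv_neg (convex_Icc _ _)
  · exact (F_contOn hd hθ).mono (fun x hx => lt_of_lt_of_le hc hx.1)
  · intro x hx
    rw [interior_Icc] at hx
    have hx0 : 0 < x := lt_trans hc hx.1
    rw [(F_hasDerivAt hd hθ hx0).deriv]
    have h1 : ((d:ℝ) - 2) * x - θ < 0 := by
      have := (lt_div_iff₀ (hd2R hd)).1 hx.2
      linarith [mul_comm ((d:ℝ) - 2) x]
    have h2 : (0:ℝ) < x / θ + 1 := by positivity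
    have h3 : (0:ℝ) < (x^2)⁻¹ * (x / θ + 1) ^ (d-2) := by positivity
    have h4 : (0:ℝ) < θ⁻¹ := by positivity
    exact mul_neg_of_neg_of_pos (mul_neg_of_pos_of_neg h3 h1) h4

end FProps

/-- Continuity of a strictly monotone surjection between closed intervals. -/
lemma contOn_of_strictMonoOn_image {g : ℝ → ℝ} {A B : ℝ} (hAB : A < B)
    (hg : StrictMonoOn g (Set.Icc A B))
    (him : g '' Set.Icc A B = Set.Icc (g A) (g B)) :
    ContinuousOn g (Set.Icc A B) := by
  have hgAB : g A < g B := hg (Set.left_mem_Icc.2 hAB.le) (Set.right_mem_Icc.2 hAB.le) hAB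
  intro z hz
  rcases eq_or_lt_of_le hz.1 with h1 | h1
  · have h : ContinuousWithinAt g (Set.Ici A) A := by
      apply hg.continuousWithinAt_right_of_image_mem_nhdsWithin
        (Icc_mem_nhdsGE hAB)
      rw [him]; exact Icc_mem_nhdsGE hgAB
    rw [← h1]
    exact h.mono Set.Icc_subset_Ici_self
  rcases eq_or_lt_of_le hz.2 with h2 | h2
  · have h : ContinuousWithinAt g (Set.Iic B) B := by
      apply hg.continuousWithinAt_left_of_image_mem_nhdsWithin
        (Icc_mem_nhdsLE hAB)
      rw [him]; exact Icc_mem_nhdsLE hgAB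
    rw [h2]
    exact h.mono Set.Icc_subset_Iic_self
  · have hca : ContinuousAt g z := by
      apply hg.continuousAt_of_image_mem_nhds (Icc_mem_nhds h1 h2)
      rw [him]
      exact Icc_mem_nhds (hg (Set.left_mem_Icc.2 hAB.le) hz h1)
        (hg hz (Set.right_mem_Icc.2 hAB.le) h2)
    exact hca.continuousWithinAt

/-- The analytic core: the scalar system has solutions for all `m` close enough to 1. -/
lemma potts_scalar_solutions (q d ℓ : ℕ) (hq : 2 ≤ q) (hd : 3 ≤ d) (hl2 : 2 ≤ ℓ)
    (hlq : ℓ ≤ q) (θ : ℝ) (hθ : 0 < θ) (hqv : (q : ℝ) * (θ / ((d : ℝ) - 2)) < 1) :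
    ∃ ml : ℝ, 1 < ml ∧ ∀ m : ℝ, 1 ≤ m → m ≤ ml → ∀ s : Bool,
      ∃ h₀ pP pM z : ℝ, 0 < z ∧ 0 < h₀ ∧ h₀ ≤ 1 ∧
        m * Fpotts d θ h₀ = z ∧
        (if s then θ / ((d:ℝ) - 2) ≤ h₀ else h₀ ≤ θ / ((d:ℝ) - 2)) ∧
        θ / ((d:ℝ) - 2) ≤ pP ∧ pP ≤ 1 ∧ 0 < pM ∧ pM ≤ θ / ((d:ℝ) - 2) ∧
        Fpotts d θ pP = z ∧ Fpotts d θ pM = z ∧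
        h₀ + ((ℓ:ℝ) - 1) * pP + ((q:ℝ) - (ℓ:ℝ)) * pM = 1 := by
  set v : ℝ := θ / ((d:ℝ) - 2) with hvdef
  set F : ℝ → ℝ := Fpotts d θ with hFdef
  have hv : 0 < v := div_pos hθ (hd2R hd)
  have hq2 : (2:ℝ) ≤ (q:ℝ) := by exact_mod_cast hq
  have hv1 : v < 1 := by nlinarith
  have hFvpos : 0 < F v := F_pos hθ hv
  have hF1pos : 0 < F 1 := F_pos hθ one_pos
  have hmemv : v ∈ Set.Icc v 1 := Set.left_mem_Icc.2 hv1.le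
  have hmem1 : (1:ℝ) ∈ Set.Icc v 1 := Set.right_mem_Icc.2 hv1.le
  have hFv1 : F v < F 1 := F_strictMonoOn hd hθ hmemv hmem1 hv1
  -- the left cutoff c
  set c : ℝ := min (v / 2) (F 1)⁻¹ with hcdef
  have hc : 0 < c := lt_min (by positivity) (inv_pos.2 hF1pos)
  have hcv : c < v := lt_of_le_of_lt (min_le_left _ _) (by linarith)
  have hFc : F 1 ≤ F c := by
    have h1 : c ≤ (F 1)⁻¹ := min_le_right _ _
    have h2 : F 1 ≤ c⁻¹ := by
      have := (inv_le_inv₀ (inv_pos.2 hF1pos) hc).2 h1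
      rwa [inv_inv] at this
    exact le_trans h2 (F_ge_inv hθ hc)
  have hFvc : F v < F c := lt_of_lt_of_le hFv1 hFc
  -- continuity of F on both intervals
  have hcontP : ContinuousOn F (Set.Icc v 1) :=
    (F_contOn hd hθ).mono (fun x hx => lt_of_lt_of_le hv hx.1)
  have hcontM : ContinuousOn F (Set.Icc c v) :=
    (F_contOn hd hθ).mono (fun x hx => lt_of_lt_of_le hc hx.1)
  -- surjectivity
  have hsurjP : Set.Icc (F v) (F 1) ⊆ F '' Set.Icc v 1 :=
    intermediate_value_Icc hv1.le hcontP
  have hsurjM : Set.Icc (F v) (F c) ⊆ F '' Set.Icc c v :=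
    intermediate_value_Icc' hcv.le hcontM
  -- inverse functions
  set gP : ℝ → ℝ := Function.invFunOn F (Set.Icc v 1) with hgPdef
  set gM : ℝ → ℝ := Function.invFunOn F (Set.Icc c v) with hgMdef
  have hgP : ∀ z ∈ Set.Icc (F v) (F 1), gP z ∈ Set.Icc v 1 ∧ F (gP z) = z := by
    intro z hz
    obtain ⟨x, hx, hfx⟩ := hsurjP hz
    exact ⟨Function.invFunOn_mem ⟨x, hx, hfx⟩, Function.invFunOn_eq ⟨x, hx, hfx⟩⟩
  have hgM : ∀ z ∈ Set.Icc (F v) (F c), gM z ∈ Set.Icc c v ∧ F (gM z) = z := by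
    intro z hz
    obtain ⟨x, hx, hfx⟩ := hsurjM hz
    exact ⟨Function.invFunOn_mem ⟨x, hx, hfx⟩, Function.invFunOn_eq ⟨x, hx, hfx⟩⟩
  -- left inverses
  have hlP : ∀ x ∈ Set.Icc v 1, gP (F x) = x := fun x hx =>
    (F_strictMonoOn hd hθ).injOn.leftInvOn_invFunOn hx
  have hlM : ∀ x ∈ Set.Icc c v, gM (F x) = x := fun x hx =>
    (F_strictAntiOn hd hθ hc).injOn.leftInvOn_invFunOn hx
  have hgPv : gP (F v) = v := hlP v hmemv
  have hgP1 : gP (F 1) = 1 := hlP 1 hmem1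
  have hgMv : gM (F v) = v := hlM v (Set.right_mem_Icc.2 hcv.le)
  have hgMc : gM (F c) = c := hlM c (Set.left_mem_Icc.2 hcv.le)
  -- monotonicity of inverses
  have hgPmono : StrictMonoOn gP (Set.Icc (F v) (F 1)) := by
    intro z1 h1 z2 h2 h12
    by_contra hle
    push_neg at hle
    have hmo := (F_strictMonoOn hd hθ).monotoneOn (hgP z2 h2).1 (hgP z1 h1).1 hle
    rw [← hFdef] at hmo
    rw [(hgP z1 h1).2, (hgP z2 h2).2] at hmo
    linarith
  have hgManti : StrictAntiOn gM (Set.Icc (F v) (F c)) := by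
    intro z1 h1 z2 h2 h12
    by_contra hle
    push_neg at hle
    have hmo := (F_strictAntiOn hd hθ hc).antitoneOn (hgM z1 h1).1 (hgM z2 h2).1 hle
    rw [← hFdef] at hmo
    rw [(hgM z1 h1).2, (hgM z2 h2).2] at hmo
    linarith
  -- images of the inverses
  have himP : gP '' Set.Icc (F v) (F 1) = Set.Icc v 1 := by
    apply Set.Subset.antisymm
    · rintro y ⟨z, hz, rfl⟩; exact (hgP z hz).1
    · intro x hx
      have hFx : F x ∈ Set.Icc (F v) (F 1) :=
        ⟨(F_strictMonoOn hd hθ).monotoneOn hmemv hx hx.1,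
         (F_strictMonoOn hd hθ).monotoneOn hx hmem1 hx.2⟩
      exact ⟨F x, hFx, hlP x hx⟩
  have himM : gM '' Set.Icc (F v) (F c) = Set.Icc c v := by
    apply Set.Subset.antisymm
    · rintro y ⟨z, hz, rfl⟩; exact (hgM z hz).1
    · intro x hx
      have hFx : F x ∈ Set.Icc (F v) (F c) :=
        ⟨(F_strictAntiOn hd hθ hc).antitoneOn hx (Set.right_mem_Icc.2 hcv.le) hx.2,
         (F_strictAntiOn hd hθ hc).antitoneOn (Set.left_mem_Icc.2 hcv.le) hx hx.1⟩
      exact ⟨F x, hFx, hlM x hx⟩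
  -- continuity of the inverses
  have hcontgP : ContinuousOn gP (Set.Icc (F v) (F 1)) := by
    apply contOn_of_strictMonoOn_image hFv1 hgPmono
    rw [himP, hgPv, hgP1]
  have hcontgM : ContinuousOn gM (Set.Icc (F v) (F c)) := by
    have hgNmono : StrictMonoOn (fun z => -(gM z)) (Set.Icc (F v) (F c)) := by
      intro z1 h1 z2 h2 h12
      simpa using hgManti h1 h2 h12
    have hN : ContinuousOn (fun z => -(gM z)) (Set.Icc (F v) (F c)) := by
      apply contOn_of_strictMonoOn_image hFvc hgNmono
      have : (fun z => -(gM z)) '' Set.Icc (F v) (F c) =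
          (fun y => -y) '' (gM '' Set.Icc (F v) (F c)) := by
        rw [Set.image_image]
      rw [this, himM, hgMv, hgMc]
      ext t
      simp only [Set.mem_image, Set.mem_Icc]
      constructor
      · rintro ⟨y, hy, rfl⟩; constructor <;> linarith [hy.1, hy.2]
      · intro ht; exact ⟨-t, ⟨by linarith [ht.2], by linarith [ht.1]⟩, by ring⟩
    have : gM = fun z => -(-(gM z)) := by funext z; ring
    rw [this]
    exact hN.neg
  -- the threshold `ml`
  set m₀ : ℝ := F 1 / F v with hm₀def
  have hm₀ : 1 < m₀ := (one_lt_div hFvpos).2 hFv1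
  have hmaps : ∀ m ∈ Set.Icc (1:ℝ) m₀, m * F v ∈ Set.Icc (F v) (F 1) := by
    intro m hm
    constructor
    · exact le_mul_of_one_le_left hFvpos.le hm.1
    · rw [hm₀def] at hm
      exact (le_div_iff₀ hFvpos).1 hm.2
  set φ : ℝ → ℝ :=
    fun m => v + ((ℓ:ℝ) - 1) * gP (m * F v) + ((q:ℝ) - (ℓ:ℝ)) * gM (m * F v) with hφdef
  have hsub : Set.Icc (F v) (F 1) ⊆ Set.Icc (F v) (F c) := Set.Icc_subset_Icc_right hFc
  have hmul : ContinuousOn (fun m : ℝ => m * F v) (Set.Icc 1 m₀) :=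
    continuousOn_id.mul continuousOn_const
  have hcontφ : ContinuousOn φ (Set.Icc 1 m₀) := by
    apply ContinuousOn.add
    apply ContinuousOn.add continuousOn_const
    · exact continuousOn_const.mul (hcontgP.comp hmul hmaps)
    · exact continuousOn_const.mul
        ((hcontgM.mono hsub).comp hmul hmaps)
  have hφ1 : φ 1 = (q:ℝ) * v := by
    rw [hφdef]
    simp only [one_mul, hgPv, hgMv]
    ring
  have hφ1lt : φ 1 < 1 := by rw [hφ1]; exact hqv
  have hev : ∀ᶠ m in nhdsWithin 1 (Set.Icc 1 m₀), φ m < 1 :=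
    ((hcontφ 1 (Set.left_mem_Icc.2 hm₀.le)).eventually_lt_const hφ1lt)
  rw [eventually_nhdsWithin_iff, Metric.eventually_nhds_iff] at hev
  obtain ⟨ε, hε, hevε⟩ := hev
  refine ⟨min m₀ (1 + ε / 2), lt_min hm₀ (by linarith), ?_⟩
  intro m hm1 hmml s
  have hm0 : (0:ℝ) < m := lt_of_lt_of_le one_pos hm1
  have hmm₀ : m ≤ m₀ := le_trans hmml (min_le_left _ _)
  have hmIcc : m ∈ Set.Icc (1:ℝ) m₀ := ⟨hm1, hmm₀⟩
  have hφm : φ m < 1 := by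
    apply hevε ?_ hmIcc
    rw [Real.dist_eq, abs_of_nonneg (by linarith)]
    have := le_trans hmml (min_le_right _ _)
    linarith
  -- the s-dependent inverse
  obtain ⟨gS, hcontgS, hgSv, hgSprop⟩ :
      ∃ gS : ℝ → ℝ, ContinuousOn gS (Set.Icc (F v) (F 1)) ∧ gS (F v) = v ∧
        ∀ w ∈ Set.Icc (F v) (F 1), 0 < gS w ∧ gS w ≤ 1 ∧ F (gS w) = w ∧
          (if s then v ≤ gS w else gS w ≤ v) := by
    cases s
    · refine ⟨gM, hcontgM.mono hsub, hgMv, fun w hw => ?_⟩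
      obtain ⟨hmem, hFeq⟩ := hgM w (hsub hw)
      exact ⟨lt_of_lt_of_le hc hmem.1, le_trans hmem.2 hv1.le, hFeq, by simp [hmem.2]⟩
    · refine ⟨gP, hcontgP, hgPv, fun w hw => ?_⟩
      obtain ⟨hmem, hFeq⟩ := hgP w hw
      exact ⟨lt_of_lt_of_le hv hmem.1, hmem.2, hFeq, by simp [hmem.1]⟩
  -- the interval for the IVT in z
  set zlo : ℝ := m * F v with hzlodef
  have hzlomem : zlo ∈ Set.Icc (F v) (F 1) := hmaps m hmIcc
  have hzlopos : 0 < zlo := mul_pos hm0 hFvpos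
  have hdivmaps : ∀ z ∈ Set.Icc zlo (F 1), z / m ∈ Set.Icc (F v) (F 1) := by
    intro z hz
    constructor
    · rw [le_div_iff₀ hm0]
      calc F v * m = m * F v := mul_comm _ _
        _ ≤ z := hz.1
    · exact le_trans (div_le_self (le_trans hzlopos.le hz.1) hm1) hz.2
  have hselfmaps : ∀ z ∈ Set.Icc zlo (F 1), z ∈ Set.Icc (F v) (F 1) := by
    intro z hz
    exact ⟨le_trans hzlomem.1 hz.1, hz.2⟩
  set T : ℝ → ℝ := fun z => gS (z / m) + ((ℓ:ℝ) - 1) * gP z + ((q:ℝ) - (ℓ:ℝ)) * gM z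
    with hTdef
  have hcontT : ContinuousOn T (Set.Icc zlo (F 1)) := by
    apply ContinuousOn.add
    apply ContinuousOn.add
    · exact hcontgS.comp (continuousOn_id.div_const m) hdivmaps
    · exact continuousOn_const.mul (hcontgP.comp continuousOn_id hselfmaps)
    · exact continuousOn_const.mul
        ((hcontgM.mono hsub).comp continuousOn_id hselfmaps)
  have hzlohi : zlo ≤ F 1 := hzlomem.2
  have hTlo : T zlo < 1 := by
    have hdiv : zlo / m = F v := by
      rw [hzlodef, mul_comm, mul_div_assoc, div_self hm0.ne', mul_one]
    calc T zlo = φ m := by rw [hTdef, hφdef]; simp only [hdiv, hgSv, hzlodef, mul_div_cancel_left₀ _ hm0.ne']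
      _ < 1 := hφm
  have hl1 : (1:ℝ) ≤ (ℓ:ℝ) - 1 := by
    have : (2:ℝ) ≤ (ℓ:ℝ) := by exact_mod_cast hl2
    linarith
  have hql : (0:ℝ) ≤ (q:ℝ) - (ℓ:ℝ) := by
    have : (ℓ:ℝ) ≤ (q:ℝ) := by exact_mod_cast hlq
    linarith
  have hThi : 1 ≤ T (F 1) := by
    have h1mem : F 1 ∈ Set.Icc zlo (F 1) := Set.right_mem_Icc.2 hzlohi
    have hS := hgSprop _ (hdivmaps _ h1mem)
    have hMz := hgM (F 1) (hsub (hselfmaps _ h1mem))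
    have hMpos : 0 < gM (F 1) := lt_of_lt_of_le hc hMz.1.1
    rw [hTdef]
    simp only [hgP1]
    nlinarith [hS.1]
  have hone : (1:ℝ) ∈ Set.Icc (T zlo) (T (F 1)) := ⟨hTlo.le, hThi⟩
  obtain ⟨z, hzmem, hTz⟩ := intermediate_value_Icc hzlohi hcontT hone
  have hzP := hgP z (hselfmaps z hzmem)
  have hzM := hgM z (hsub (hselfmaps z hzmem))
  have hzS := hgSprop (z / m) (hdivmaps z hzmem)
  have hzpos : 0 < z := lt_of_lt_of_le hzlopos hzmem.1
  refine ⟨gS (z / m), gP z, gM z, z, hzpos, hzS.1, hzS.2.1, ?_, hzS.2.2.2,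
    hzP.1.1, hzP.1.2, lt_of_lt_of_le hc hzM.1.1, hzM.1.2, hzP.2, hzM.2, ?_⟩
  · rw [hzS.2.2.1, mul_comm, div_mul_cancel₀ _ hm0.ne']
  · exact hTz

/-- existence of `ℓ_±`-type Potts BP fixed points for `2 ≤ ℓ ≤ q`, provided
`qv < 1` and the field `m = e^B` is sufficiently close to `1`. -/
theorem potts_ell_type_solutions_exist
    (q d ℓ : ℕ) (hq : 2 ≤ q) (hd : 3 ≤ d) (hl2 : 2 ≤ ℓ) (hlq : ℓ ≤ q)
    (β : ℝ) (hβ : 0 < β)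
    (hqv : (q : ℝ) * ((1 / (Real.exp β - 1)) / ((d : ℝ) - 2)) < 1) :
    ∃ ml : ℝ, 1 < ml ∧ ∀ B : ℝ, 0 ≤ B → Real.exp B ≤ ml →
      ∀ s : Bool,
        ∃ h ∈ bpFixedPts q d (pottsPsi q β) (pottsPsib q B), ∃ z : ℝ, 0 < z ∧
          Real.exp B * Fpotts d (1 / (Real.exp β - 1)) (h ⟨0, by omega⟩) = z ∧
          (if s then (1 / (Real.exp β - 1)) / ((d : ℝ) - 2) ≤ h ⟨0, by omega⟩
            else h ⟨0, by omega⟩ ≤ (1 / (Real.exp β - 1)) / ((d : ℝ) - 2)) ∧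
          ∃ pP pM : ℝ,
            (1 / (Real.exp β - 1)) / ((d : ℝ) - 2) ≤ pP ∧ pP ≤ 1 ∧
            0 < pM ∧ pM ≤ (1 / (Real.exp β - 1)) / ((d : ℝ) - 2) ∧
            Fpotts d (1 / (Real.exp β - 1)) pP = z ∧
            Fpotts d (1 / (Real.exp β - 1)) pM = z ∧
            ∃ S : Finset (Fin q), (⟨0, by omega⟩ : Fin q) ∉ S ∧ S.card = ℓ - 1 ∧
              (∀ σ ∈ S, h σ = pP) ∧
              ∀ σ : Fin q, σ ≠ ⟨0, by omega⟩ → σ ∉ S → h σ = pM := by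
  have hE : 0 < Real.exp β - 1 := by
    have := Real.add_one_lt_exp (ne_of_gt hβ)
    linarith
  set θ : ℝ := 1 / (Real.exp β - 1) with hθdef
  have hθ : 0 < θ := by positivity
  obtain ⟨ml, hml, hsol⟩ := potts_scalar_solutions q d ℓ hq hd hl2 hlq θ hθ hqv
  refine ⟨ml, hml, ?_⟩
  intro B hB hBml s
  have hm1 : 1 ≤ Real.exp B := Real.one_le_exp hB
  obtain ⟨h₀, pP, pM, z, hz, hh₀, hh₀1, hmF, hif, hpPv, hpP1, hpM0, hpMv, hFpP, hFpM,
    hsum⟩ := hsol (Real.exp B) hm1 hBml s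
  have hq0 : 0 < q := by omega
  set z0 : Fin q := ⟨0, hq0⟩ with hz0def
  have hcard : ℓ - 1 ≤ (Finset.univ.erase z0).card := by
    rw [Finset.card_erase_of_mem (Finset.mem_univ _), Finset.card_univ, Fintype.card_fin]
    omega
  obtain ⟨S, hSsub, hScard⟩ := Finset.exists_subset_card_eq hcard
  set h : Fin q → ℝ := fun σ => if σ = z0 then h₀ else if σ ∈ S then pP else pM with hhdef
  have hhz0 : h z0 = h₀ := by simp [hhdef]
  have hSne : ∀ σ ∈ S, σ ≠ z0 := fun σ hσ => Finset.ne_of_mem_erase (hSsub hσ)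
  have hhS : ∀ σ ∈ S, h σ = pP := by
    intro σ hσ
    simp [hhdef, hSne σ hσ, hσ]
  have hhM : ∀ σ : Fin q, σ ≠ z0 → σ ∉ S → h σ = pM := by
    intro σ h1 h2
    simp [hhdef, h1, h2]
  have hpos : ∀ σ, 0 < h σ := by
    intro σ
    by_cases h1 : σ = z0
    · rw [h1, hhz0]; exact hh₀
    by_cases h2 : σ ∈ S
    · rw [hhS σ h2]
      have hv : 0 < θ / ((d:ℝ) - 2) := by
        have : (3:ℝ) ≤ (d:ℝ) := by exact_mod_cast hd
        apply div_pos hθ; linarith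
      linarith
    · rw [hhM σ h1 h2]; exact hpM0
  -- the sum of the coordinates is 1
  have hsum1 : ∑ σ, h σ = 1 := by
    rw [← Finset.add_sum_erase _ h (Finset.mem_univ z0), hhz0]
    have e1 : ∑ σ ∈ Finset.univ.erase z0, h σ
        = ∑ σ ∈ Finset.univ.erase z0, (if σ ∈ S then pP else pM) := by
      apply Finset.sum_congr rfl
      intro σ hσ
      rw [hhdef]
      simp only [Finset.ne_of_mem_erase hσ, if_false]
    rw [e1, Finset.sum_ite, Finset.sum_const, Finset.sum_const]
    have e2 : Finset.filter (fun σ => σ ∈ S) (Finset.univ.erase z0) = S := by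
      apply Finset.Subset.antisymm
      · intro σ hσ; exact (Finset.mem_filter.1 hσ).2
      · intro σ hσ; exact Finset.mem_filter.2 ⟨hSsub hσ, hσ⟩
    have e3 : Finset.filter (fun σ => σ ∉ S) (Finset.univ.erase z0)
        = Finset.univ.erase z0 \ S := by
      rw [Finset.sdiff_eq_filter]
    rw [e2, e3, hScard, Finset.card_sdiff_of_subset hSsub,
      Finset.card_erase_of_mem (Finset.mem_univ _), Finset.card_univ, Fintype.card_fin,
      hScard]
    have e4 : q - 1 - (ℓ - 1) = q - ℓ := by omega
    rw [e4, nsmul_eq_mul, nsmul_eq_mul]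
    have c1 : ((ℓ - 1 : ℕ) : ℝ) = (ℓ : ℝ) - 1 := by
      have : (1:ℕ) ≤ ℓ := by omega
      push_cast [this]; ring
    have c2 : ((q - ℓ : ℕ) : ℝ) = (q : ℝ) - (ℓ : ℝ) := by push_cast [hlq]; ring
    rw [c1, c2]
    linarith [hsum]
  -- BP computations
  have key1 : ∀ σ : Fin q, (∑ σ', pottsPsi q β σ σ' * h σ')
      = (Real.exp β - 1) * h σ + 1 := by
    intro σ
    have e : ∀ σ' : Fin q, pottsPsi q β σ σ' * h σ'
        = (if σ = σ' then (Real.exp β - 1) * h σ' else 0) + h σ' := by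
      intro σ'
      unfold pottsPsi
      split_ifs with hss
      · ring
      · simp [Real.exp_zero]
    rw [Finset.sum_congr rfl (fun σ' _ => e σ'), Finset.sum_add_distrib, hsum1,
      Finset.sum_ite_eq Finset.univ σ (fun σ' => (Real.exp β - 1) * h σ'),
      if_pos (Finset.mem_univ σ)]
  have hψF : ∀ σ : Fin q, pottsPsib q B σ * Fpotts d θ (h σ) = z := by
    intro σ
    by_cases h1 : σ = z0
    · have e : pottsPsib q B z0 = Real.exp B := by
        simp [pottsPsib, hz0def]
      rw [h1, e, hhz0]
      exact hmF
    · have hval : σ.1 ≠ 0 := fun hval => h1 (Fin.ext hval)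
      have : pottsPsib q B σ = 1 := by
        unfold pottsPsib
        rw [if_neg hval, Real.exp_zero]
      rw [this, one_mul]
      by_cases h2 : σ ∈ S
      · rw [hhS σ h2]; exact hFpP
      · rw [hhM σ h1 h2]; exact hFpM
  have key2 : ∀ σ : Fin q,
      pottsPsib q B σ * ((Real.exp β - 1) * h σ + 1) ^ (d - 1) = z * h σ := by
    intro σ
    have e1 : (Real.exp β - 1) * h σ + 1 = h σ / θ + 1 := by
      rw [hθdef, one_div, div_inv_eq_mul]
      ring
    have e2 : h σ * Fpotts d θ (h σ) = (h σ / θ + 1) ^ (d - 1) := by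
      unfold Fpotts
      rw [← mul_assoc, mul_inv_cancel₀ (hpos σ).ne', one_mul]
    calc pottsPsib q B σ * ((Real.exp β - 1) * h σ + 1) ^ (d - 1)
        = (pottsPsib q B σ * Fpotts d θ (h σ)) * h σ := by rw [e1, ← e2]; ring
      _ = z * h σ := by rw [hψF σ]
  have key3 : (∑ τ, pottsPsib q B τ * (∑ σ', pottsPsi q β τ σ' * h σ') ^ (d - 1)) = z := by
    have : ∀ τ : Fin q, pottsPsib q B τ * (∑ σ', pottsPsi q β τ σ' * h σ') ^ (d - 1)
        = z * h τ := by
      intro τ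
      rw [key1 τ, key2 τ]
    rw [Finset.sum_congr rfl (fun τ _ => this τ), ← Finset.mul_sum, hsum1, mul_one]
  have hbp : BPmap q d (pottsPsi q β) (pottsPsib q B) h = h := by
    funext σ
    show pottsPsib q B σ * (∑ σ', pottsPsi q β σ σ' * h σ') ^ (d - 1) /
        (∑ τ, pottsPsib q B τ * (∑ σ', pottsPsi q β τ σ' * h σ') ^ (d - 1)) = h σ
    rw [key1 σ, key2 σ, key3, mul_comm, mul_div_assoc, div_self hz.ne', mul_one]
  refine ⟨h, ⟨⟨fun σ => (hpos σ).le, hsum1⟩, hbp⟩, z, hz, ?_, ?_, pP, pM,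
    hpPv, hpP1, hpM0, hpMv, hFpP, hFpM, S, ?_, hScard, hhS, ?_⟩
  · show Real.exp B * Fpotts d θ (h z0) = z
    rw [hhz0]; exact hmF
  · show if s then θ / ((d:ℝ) - 2) ≤ h z0 else h z0 ≤ θ / ((d:ℝ) - 2)
    rw [hhz0]; exact hif
  · intro hz0S
    exact (Finset.mem_erase.1 (hSsub hz0S)).1 rfl
  · intro σ h1 h2
    exact hhM σ h1 h2

end
end

section
/- For the q-state Potts model with q ≥ 2, d ≥ 3, m = e^B ≥ 1 and θ = 1/(e^β − 1) > 0: let h ∈ Δ* be a BP fixed point for which there exist two distinct spins σ1 ≠ σ2 with h_{σ1} = h_{σ2} > v. Then the corresponding point h ⊗_ψ h ∈ Δ_e is not a local maximizer of the edge Bethe functional 𝚽. In particular, ℓ_±-type solutions with ℓ > 2 whose value p_+ strictly exceeds v are never local maximizers of 𝚽. -/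
open Finset Filter MeasureTheory

noncomputable section

open Finset Filter

lemma hasDerivAt_mulLog {x : ℝ} (hx : x ≠ 0) :
    HasDerivAt (fun y : ℝ => y * Real.log y) (Real.log x + 1) x := by
  have := (hasDerivAt_id x).fun_mul (Real.hasDerivAt_log hx)
  simpa [mul_inv_cancel₀ hx, add_comm] using this

lemma hasDerivAt_affine (a c η : ℝ) : HasDerivAt (fun η : ℝ => a + η * c) c η := by
  simpa using ((hasDerivAt_id η).mul_const c).const_add a

lemma hasDerivAt_affine_mulLog {a c η : ℝ} (h : 0 < a + η * c) :
    HasDerivAt (fun η : ℝ => (a + η * c) * Real.log (a + η * c))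
      ((Real.log (a + η * c) + 1) * c) η := by
  have := (hasDerivAt_mulLog h.ne').comp η (hasDerivAt_affine a c η); exact this

lemma hasDerivAt_affine_log {a c η : ℝ} (h : 0 < a + η * c) :
    HasDerivAt (fun η : ℝ => Real.log (a + η * c)) ((a + η * c)⁻¹ * c) η := by
  have := (Real.hasDerivAt_log h.ne').comp η (hasDerivAt_affine a c η); exact this

lemma localmax_aux (f D : ℝ → ℝ) (ε c : ℝ) (hε : 0 < ε) (hc : 0 < c)
    (hf : ∀ η ∈ Set.Ioo (-ε) ε, HasDerivAt f (D η) η)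
    (hD0 : D 0 = 0) (hD : HasDerivAt D c 0) :
    ∀ᶠ η in nhdsWithin (0:ℝ) (Set.Ioi 0), f 0 < f η := by
  have hslope : Tendsto (slope D 0) (nhdsWithin (0:ℝ) {(0:ℝ)}ᶜ) (nhds c) :=
    hasDerivAt_iff_tendsto_slope.1 hD
  have hmemIoi : ∀ᶠ y in nhds c, y ∈ Set.Ioi (0:ℝ) := isOpen_Ioi.eventually_mem hc
  have hev : ∀ᶠ η in nhdsWithin (0:ℝ) {(0:ℝ)}ᶜ, 0 < slope D 0 η := hslope.eventually hmemIoi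
  have hev2 : ∀ᶠ η in nhdsWithin (0:ℝ) (Set.Ioi 0), 0 < D η := by
    have h1 : ∀ᶠ η in nhdsWithin (0:ℝ) (Set.Ioi 0), 0 < slope D 0 η :=
      (hev.filter_mono (nhdsWithin_mono 0 (fun x hx => ne_of_gt hx)))
    have h2 : ∀ᶠ η in nhdsWithin (0:ℝ) (Set.Ioi 0), (0:ℝ) < η :=
      eventually_mem_nhdsWithin
    filter_upwards [h1, h2] with η hη hηpos
    have : slope D 0 η = D η / η := by simp [slope_def_field, hD0]
    rw [this] at hη
    have := mul_pos hη hηpos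
    rwa [div_mul_cancel₀ _ (ne_of_gt hηpos)] at this
  rw [eventually_iff_exists_mem] at hev2
  obtain ⟨s, hs, hsD⟩ := hev2
  rw [mem_nhdsGT_iff_exists_Ioo_subset] at hs
  obtain ⟨u, hu, hsub⟩ := hs
  have hu0 : (0:ℝ) < u := hu
  set r : ℝ := min u ε with hrdef
  have hr : 0 < r := lt_min hu0 hε
  have hmono : StrictMonoOn f (Set.Icc 0 (r/2)) := by
    apply strictMonoOn_of_deriv_pos (convex_Icc _ _)
    · intro x hx
      have hx' : x ∈ Set.Ioo (-ε) ε := by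
        constructor
        · linarith [hx.1]
        · have := hx.2; have : x ≤ r/2 := hx.2
          have hrε : r ≤ ε := min_le_right _ _
          linarith
      exact (hf x hx').continuousAt.continuousWithinAt
    · intro x hx
      rw [interior_Icc] at hx
      have hx' : x ∈ Set.Ioo (-ε) ε := by
        constructor
        · linarith [hx.1]
        · have hrε : r ≤ ε := min_le_right _ _; have := hx.2; linarith
      rw [(hf x hx').deriv]
      apply hsD
      apply hsub
      constructor
      · exact hx.1
      · have hru : r ≤ u := min_le_left _ _; have := hx.2; linarith
  have hIoo : Set.Ioo (0:ℝ) (r/2) ∈ nhdsWithin (0:ℝ) (Set.Ioi 0) :=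
    Ioo_mem_nhdsGT_of_mem ⟨le_refl _, by linarith⟩
  filter_upwards [hIoo] with η hη
  exact hmono ⟨le_refl _, by linarith [hη.2]⟩ ⟨hη.1.le, hη.2.le⟩ hη.1

lemma sum_support_pair {q : ℕ} {σ1 σ2 : Fin q} (hne : σ1 ≠ σ2) (f : Fin q → ℝ)
    (h0 : ∀ σ, σ ≠ σ1 → σ ≠ σ2 → f σ = 0) : ∑ σ, f σ = f σ1 + f σ2 := by
  rw [← Finset.sum_pair hne]
  refine (Finset.sum_subset (Finset.subset_univ _) ?_).symm
  intro σ _ hσ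
  simp only [Finset.mem_insert, Finset.mem_singleton, not_or] at hσ
  exact h0 σ hσ.1 hσ.2

lemma pottsPsi_eq (q : ℕ) (β : ℝ) (σ σ' : Fin q) :
    pottsPsi q β σ σ' = 1 + (if σ = σ' then Real.exp β - 1 else 0) := by
  unfold pottsPsi
  split <;> simp [Real.exp_zero]

lemma psi_double {q : ℕ} (β : ℝ) (f g : Fin q → ℝ) :
    ∑ σ, ∑ σ', pottsPsi q β σ σ' * f σ * g σ' =
      (∑ σ, f σ) * (∑ σ, g σ) + (Real.exp β - 1) * ∑ σ, f σ * g σ := by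
  have : ∀ σ σ', pottsPsi q β σ σ' * f σ * g σ' =
      f σ * g σ' + (if σ' = σ then (Real.exp β - 1) * (f σ * g σ') else 0) := by
    intro σ σ'
    rw [pottsPsi_eq]
    by_cases hh : σ = σ' <;> simp [hh, eq_comm] <;> ring
  simp only [this]
  rw [Finset.sum_congr rfl fun σ _ => Finset.sum_add_distrib]
  rw [Finset.sum_add_distrib]
  congr 1
  · rw [← Finset.sum_mul_sum]
  · rw [Finset.mul_sum]
    refine Finset.sum_congr rfl fun σ _ => ?_
    simp [Finset.sum_ite_eq]

lemma ptws_helper (ψ hσ hσ' z eσ eσ' : ℝ) (hψ : 0 < ψ) (h1 : 0 < hσ) (h2 : 0 < hσ')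
    (hz : 0 < z) :
    (ψ * hσ * hσ' / z)⁻¹ * (ψ * (eσ * hσ' + hσ * eσ') / z)
        * (ψ * (eσ * hσ' + hσ * eσ') / z)
      = (ψ * (eσ * eσ * hσ⁻¹) * hσ' + (2 * (ψ * eσ * eσ') + ψ * hσ * (eσ' * eσ' * hσ'⁻¹))) / z := by
  rw [eq_div_iff hz.ne', inv_div]
  field_simp
  ring

set_option maxHeartbeats 1000000

/-- a Potts BP fixed point with two distinct spins sharing a common value
strictly above `v` never corresponds (via `h ↦ h ⊗_ψ h`) to a local maximizer of the edge
Bethe functional. -/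
theorem potts_not_local_max_of_two_high
    (q d : ℕ) (hq : 2 ≤ q) (hd : 3 ≤ d) (β B : ℝ) (hβ : 0 < β) (hB : 0 ≤ B)
    (h : Fin q → ℝ) (hfix : h ∈ bpFixedPts q d (pottsPsi q β) (pottsPsib q B))
    (σ1 σ2 : Fin q) (hne : σ1 ≠ σ2) (heq : h σ1 = h σ2)
    (hgt : (1 / (Real.exp β - 1)) / ((d : ℝ) - 2) < h σ1) :
    ¬ IsLocalMaxOn (edgePhi q d (pottsPsi q β) (pottsPsib q B)) (edgeSimplex q)
        (tensorPsi q (pottsPsi q β) h) := by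
  intro hmax
  obtain ⟨⟨hpos0, hsum⟩, hfixpt⟩ := hfix
  set b : ℝ := Real.exp β - 1 with hbdef
  have hb : 0 < b := by
    have : (1:ℝ) < Real.exp β := by
      rw [← Real.exp_zero]; exact Real.exp_lt_exp.2 hβ
    simp only [hbdef]; linarith
  set ψ : Fin q → Fin q → ℝ := pottsPsi q β with hψdef
  set ψb : Fin q → ℝ := pottsPsib q B with hψbdef
  have hψ : ∀ σ σ' : Fin q, ψ σ σ' = 1 + (if σ = σ' then b else 0) := pottsPsi_eq q β
  have hψpos : ∀ σ σ', 0 < ψ σ σ' := fun σ σ' => Real.exp_pos _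
  have hψsymm : ∀ σ σ', ψ σ σ' = ψ σ' σ := by
    intro σ σ'; rw [hψ, hψ]; simp [eq_comm]
  have hψbpos : ∀ σ, 0 < ψb σ := fun σ => Real.exp_pos _
  set S : Fin q → ℝ := fun σ => ∑ σ', ψ σ σ' * h σ' with hSdef
  have hS : ∀ σ, S σ = 1 + b * h σ := by
    intro σ
    have : ∀ σ', ψ σ σ' * h σ' = h σ' + (if σ' = σ then b * h σ' else 0) := by
      intro σ'
      rw [hψ]
      by_cases hh : σ = σ' <;> simp [hh, eq_comm] <;> ring
    simp only [hSdef, this]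
    rw [Finset.sum_add_distrib, hsum, Finset.sum_ite_eq' univ σ (fun σ' => b * h σ')]
    simp
  have hSpos : ∀ σ, 0 < S σ := by
    intro σ; rw [hS]; have := hpos0 σ; nlinarith
  set Z : ℝ := ∑ τ, ψb τ * S τ ^ (d - 1) with hZdef
  have hZpos : 0 < Z :=
    Finset.sum_pos (fun τ _ => mul_pos (hψbpos τ) (pow_pos (hSpos τ) _)) ⟨σ1, mem_univ σ1⟩
  have hfixid : ∀ σ, ψb σ * S σ ^ (d - 1) = Z * h σ := by
    intro σ
    have hthis : ψb σ * S σ ^ (d - 1) / Z = h σ := congrFun hfixpt σ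
    rw [div_eq_iff hZpos.ne'] at hthis
    rw [hthis]; ring
  have hpos : ∀ σ, 0 < h σ := by
    intro σ
    have := hfixid σ
    have hl : 0 < ψb σ * S σ ^ (d - 1) := mul_pos (hψbpos σ) (pow_pos (hSpos σ) _)
    nlinarith
  set p : ℝ := h σ1 with hpdef
  have hp : 0 < p := hpos σ1
  have heq2 : h σ2 = p := heq.symm
  have hSeq : S σ2 = S σ1 := by rw [hS, hS, heq2, ← hpdef]
  have hψbeq : ψb σ2 = ψb σ1 := by
    have h1 := hfixid σ1
    have h2 := hfixid σ2
    rw [hSeq, heq2] at h2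
    rw [← hpdef] at h1
    exact mul_right_cancel₀ (pow_pos (hSpos σ1) _).ne' (h2.trans h1.symm)
  set z : ℝ := ∑ τ, ∑ τ', ψ τ τ' * h τ * h τ' with hzdef
  have hzS : z = ∑ τ, h τ * S τ := by
    rw [hzdef]
    refine Finset.sum_congr rfl fun τ _ => ?_
    rw [hSdef, Finset.mul_sum]
    exact Finset.sum_congr rfl fun τ' _ => by ring
  have hz : 0 < z := by
    rw [hzS]
    exact Finset.sum_pos (fun τ _ => mul_pos (hpos τ) (hSpos τ)) ⟨σ1, mem_univ σ1⟩
  set e : Fin q → ℝ := fun σ => if σ = σ1 then 1 else if σ = σ2 then -1 else 0 with hedef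
  have he1 : e σ1 = 1 := by simp [hedef]
  have he2 : e σ2 = -1 := by simp [hedef, hne.symm]
  have he0 : ∀ σ, σ ≠ σ1 → σ ≠ σ2 → e σ = 0 := by
    intro σ hh1 hh2; simp [hedef, hh1, hh2]
  set δ : Fin q → Fin q → ℝ := fun σ σ' => ψ σ σ' * (e σ * h σ' + h σ * e σ') / z with hδdef
  set K : Fin q → Fin q → ℝ := fun σ σ' => ψ σ σ' * h σ * h σ' / z with hKdef
  have hKtensor : tensorPsi q ψ h = K := rfl
  have hKpos : ∀ σ σ', 0 < K σ σ' :=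
    fun σ σ' => div_pos (mul_pos (mul_pos (hψpos _ _) (hpos _)) (hpos _)) hz
  have hδsymm : ∀ σ σ', δ σ σ' = δ σ' σ := by
    intro σ σ'; simp only [hδdef]; rw [hψsymm σ σ']; ring
  set m : Fin q → ℝ := fun σ => h σ * S σ / z with hmdef
  have hmpos : ∀ σ, 0 < m σ := fun σ => div_pos (mul_pos (hpos σ) (hSpos σ)) hz
  set δb : Fin q → ℝ := fun σ => e σ * (1 + 2 * b * h σ) / z with hδbdef
  have hδb0 : ∀ σ, σ ≠ σ1 → σ ≠ σ2 → δb σ = 0 := by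
    intro σ hh1 hh2; simp [hδbdef, he0 σ hh1 hh2]
  have hKrow : ∀ σ, ∑ σ', K σ σ' = m σ := by
    intro σ
    simp only [hKdef, hmdef]
    rw [← Finset.sum_div]
    congr 1
    rw [hSdef, Finset.mul_sum]
    exact Finset.sum_congr rfl fun σ' _ => by ring
  have hT : ∀ σ, ∑ σ', ψ σ σ' * e σ' = b * e σ := by
    intro σ
    have hpt : ∀ σ', ψ σ σ' * e σ' = e σ' + (if σ' = σ then b * e σ' else 0) := by
      intro σ'
      rw [hψ]
      by_cases hh : σ = σ' <;> simp [hh, eq_comm] <;> ring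
    simp only [hpt]
    rw [Finset.sum_add_distrib, Finset.sum_ite_eq' univ σ (fun σ' => b * e σ')]
    have hse : ∑ σ', e σ' = 0 := by
      rw [sum_support_pair hne e he0, he1, he2]; ring
    simp [hse]
  have hδrow : ∀ σ, ∑ σ', δ σ σ' = δb σ := by
    intro σ
    simp only [hδdef, hδbdef]
    rw [← Finset.sum_div]
    congr 1
    have : ∑ σ', ψ σ σ' * (e σ * h σ' + h σ * e σ')
        = e σ * S σ + h σ * (b * e σ) := by
      rw [← hT σ, hSdef, Finset.mul_sum, Finset.mul_sum, ← Finset.sum_add_distrib]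
      exact Finset.sum_congr rfl fun σ' _ => by ring
    rw [this, hS]
    ring
  have hmarg : ∀ η : ℝ, ∀ σ, marg q (fun a a' => K a a' + η * δ a a') σ = m σ + η * δb σ := by
    intro η σ
    unfold marg
    rw [Finset.sum_add_distrib, hKrow, ← Finset.mul_sum, hδrow]
  -- small ball where all entries stay positive
  have hopen : IsOpen {η : ℝ | ∀ σ σ', 0 < K σ σ' + η * δ σ σ'} := by
    have hset : {η : ℝ | ∀ σ σ', 0 < K σ σ' + η * δ σ σ'} =
        ⋂ σ, ⋂ σ', {η : ℝ | 0 < K σ σ' + η * δ σ σ'} := by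
      ext x; simp [Set.mem_iInter]
    rw [hset]
    refine isOpen_iInter_of_finite fun σ => isOpen_iInter_of_finite fun σ' => ?_
    exact isOpen_lt continuous_const (by fun_prop)
  obtain ⟨ε, hε, hball⟩ := Metric.isOpen_iff.1 hopen 0 (by
    intro σ σ'; simpa using hKpos σ σ')
  have hballabs : ∀ η : ℝ, |η| < ε → ∀ σ σ', 0 < K σ σ' + η * δ σ σ' := by
    intro η hη
    exact hball (by simpa [Real.dist_eq] using hη)
  -- sums
  have pairsum : ∀ f : Fin q → ℝ,
      (∑ σ, f σ * δb σ) = (f σ1 - f σ2) * (1 + 2 * b * p) / z := by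
    intro f
    rw [sum_support_pair hne _ (fun σ h1 h2 => by rw [hδb0 σ h1 h2, mul_zero])]
    simp only [hδbdef, he1, he2, heq2, ← hpdef]
    ring
  have hsumδb : ∑ σ, δb σ = 0 := by
    have := pairsum (fun _ => 1)
    simpa using this
  have hsumK : ∑ σ, ∑ σ', K σ σ' = 1 := by
    have : ∑ σ, ∑ σ', K σ σ' = ∑ σ, m σ := Finset.sum_congr rfl fun σ _ => hKrow σ
    rw [this]
    have : ∑ σ, m σ = (∑ τ, h τ * S τ) / z := by
      rw [Finset.sum_div]
    rw [this, ← hzS, div_self hz.ne']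
  have hsumδ : ∑ σ, ∑ σ', δ σ σ' = 0 := by
    have : ∑ σ, ∑ σ', δ σ σ' = ∑ σ, δb σ := Finset.sum_congr rfl fun σ _ => hδrow σ
    rw [this, hsumδb]
  have hmem : ∀ η : ℝ, |η| < ε →
      (fun σ σ' => K σ σ' + η * δ σ σ') ∈ edgeSimplex q := by
    intro η hη
    refine ⟨fun σ σ' => (hballabs η hη σ σ').le, fun σ σ' => ?_, ?_⟩
    · show K σ σ' + η * δ σ σ' = K σ' σ + η * δ σ' σ
      rw [hδsymm σ σ', show K σ σ' = K σ' σ by simp only [hKdef]; rw [hψsymm σ σ']; ring]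
    · show (∑ σ, ∑ σ', (K σ σ' + η * δ σ σ')) = 1
      have hrw : ∀ σ : Fin q, ∑ σ', (K σ σ' + η * δ σ σ')
          = (∑ σ', K σ σ') + η * ∑ σ', δ σ σ' := by
        intro σ; rw [Finset.sum_add_distrib, Finset.mul_sum]
      simp only [hrw]
      rw [Finset.sum_add_distrib, hsumK, ← Finset.mul_sum, hsumδ, mul_zero, add_zero]
  -- the curve and its derivative
  set φ : ℝ → ℝ := fun η => edgePhi q d ψ ψb (fun σ σ' => K σ σ' + η * δ σ σ') with hφdef
  have hφform : φ = fun η =>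
      (((∑ σ, (m σ + η * δb σ) * Real.log (ψb σ))
      + ((d:ℝ) - 1) * (∑ σ, (m σ + η * δb σ) * Real.log (m σ + η * δb σ)))
      + ((d:ℝ)/2) * (∑ σ, ∑ σ', (K σ σ' + η * δ σ σ') * Real.log (ψ σ σ')))
      - ((d:ℝ)/2) * (∑ σ, ∑ σ', (K σ σ' + η * δ σ σ') * Real.log (K σ σ' + η * δ σ σ')) := by
    funext η
    simp only [hφdef, edgePhi, ent1, ent2, hmarg η]
    ring
  set Dφ : ℝ → ℝ := fun η =>
      (((∑ σ, δb σ * Real.log (ψb σ))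
      + ((d:ℝ) - 1) * (∑ σ, (Real.log (m σ + η * δb σ) + 1) * δb σ))
      + ((d:ℝ)/2) * (∑ σ, ∑ σ', δ σ σ' * Real.log (ψ σ σ')))
      - ((d:ℝ)/2) * (∑ σ, ∑ σ', (Real.log (K σ σ' + η * δ σ σ') + 1) * δ σ σ') with hDφdef
  have hmη : ∀ η : ℝ, |η| < ε → ∀ σ, 0 < m σ + η * δb σ := by
    intro η hη σ
    have : m σ + η * δb σ = marg q (fun a a' => K a a' + η * δ a a') σ := (hmarg η σ).symm
    rw [this]
    unfold marg
    exact Finset.sum_pos (fun σ' _ => hballabs η hη σ σ') ⟨σ1, mem_univ σ1⟩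
  have hφderiv : ∀ η : ℝ, |η| < ε → HasDerivAt φ (Dφ η) η := by
    intro η hη
    rw [hφform]
    have h1 : HasDerivAt (fun η : ℝ => ∑ σ, (m σ + η * δb σ) * Real.log (ψb σ))
        (∑ σ, δb σ * Real.log (ψb σ)) η := by
      refine HasDerivAt.fun_sum fun σ _ => ?_
      simpa using (hasDerivAt_affine (m σ) (δb σ) η).mul_const (Real.log (ψb σ))
    have h2 : HasDerivAt (fun η : ℝ => ∑ σ, (m σ + η * δb σ) * Real.log (m σ + η * δb σ))
        (∑ σ, (Real.log (m σ + η * δb σ) + 1) * δb σ) η :=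
      HasDerivAt.fun_sum fun σ _ => hasDerivAt_affine_mulLog (hmη η hη σ)
    have h3 : HasDerivAt (fun η : ℝ => ∑ σ, ∑ σ', (K σ σ' + η * δ σ σ') * Real.log (ψ σ σ'))
        (∑ σ, ∑ σ', δ σ σ' * Real.log (ψ σ σ')) η := by
      refine HasDerivAt.fun_sum fun σ _ => HasDerivAt.fun_sum fun σ' _ => ?_
      simpa using (hasDerivAt_affine (K σ σ') (δ σ σ') η).mul_const (Real.log (ψ σ σ'))
    have h4 : HasDerivAt
        (fun η : ℝ => ∑ σ, ∑ σ', (K σ σ' + η * δ σ σ') * Real.log (K σ σ' + η * δ σ σ'))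
        (∑ σ, ∑ σ', (Real.log (K σ σ' + η * δ σ σ') + 1) * δ σ σ') η :=
      HasDerivAt.fun_sum fun σ _ => HasDerivAt.fun_sum fun σ' _ =>
        hasDerivAt_affine_mulLog (hballabs η hη σ σ')
    exact ((h1.add (h2.const_mul _)).add (h3.const_mul _)).sub (h4.const_mul _)
  -- column sums of δ
  have hδcol : ∀ σ', ∑ σ, δ σ σ' = δb σ' := by
    intro σ'
    rw [Finset.sum_congr rfl fun σ _ => hδsymm σ σ']
    exact hδrow σ'
  -- log of K decomposes
  have hlogK : ∀ σ σ', Real.log (K σ σ') =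
      Real.log (ψ σ σ') + (Real.log (h σ) + Real.log (h σ') - Real.log z) := by
    intro σ σ'
    show Real.log (ψ σ σ' * h σ * h σ' / z) = _
    rw [Real.log_div (mul_pos (mul_pos (hψpos σ σ') (hpos σ)) (hpos σ')).ne' hz.ne',
      Real.log_mul (mul_pos (hψpos σ σ') (hpos σ)).ne' (hpos σ').ne',
      Real.log_mul (hψpos σ σ').ne' (hpos σ).ne']
    ring
  have hZ1 : ∑ σ, Real.log (h σ) * δb σ = 0 := by
    have hps := pairsum (fun σ => Real.log (h σ))
    rw [hps, ← hpdef, heq2]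
    ring
  have hT4 : ∑ σ, ∑ σ', (Real.log (K σ σ') + 1) * δ σ σ'
      = ∑ σ, ∑ σ', δ σ σ' * Real.log (ψ σ σ') := by
    have hexp : ∀ σ σ', (Real.log (K σ σ') + 1) * δ σ σ'
        = δ σ σ' * Real.log (ψ σ σ') + (Real.log (h σ) * δ σ σ'
          + (Real.log (h σ') * δ σ σ' + (1 - Real.log z) * δ σ σ')) := by
      intro σ σ'; rw [hlogK]; ring
    simp only [hexp, Finset.sum_add_distrib]
    have hY1 : ∑ σ, ∑ σ', Real.log (h σ) * δ σ σ' = 0 := by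
      rw [Finset.sum_congr rfl fun σ (_ : σ ∈ Finset.univ) =>
        (by rw [← Finset.mul_sum, hδrow] :
          ∑ σ', Real.log (h σ) * δ σ σ' = Real.log (h σ) * δb σ)]
      exact hZ1
    have hY2 : ∑ σ, ∑ σ', Real.log (h σ') * δ σ σ' = 0 := by
      have hcomm : (∑ σ, ∑ σ', Real.log (h σ') * δ σ σ')
          = ∑ σ', ∑ σ, Real.log (h σ') * δ σ σ' := Finset.sum_comm
      rw [hcomm, Finset.sum_congr rfl fun σ' (_ : σ' ∈ Finset.univ) =>
        (by rw [← Finset.mul_sum, hδcol] :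
          (∑ σ, Real.log (h σ') * δ σ σ') = Real.log (h σ') * δb σ')]
      exact hZ1
    have hY3 : ∑ σ, ∑ σ', (1 - Real.log z) * δ σ σ' = 0 := by
      rw [Finset.sum_congr rfl fun σ (_ : σ ∈ Finset.univ) => (Finset.mul_sum _ _ _).symm,
        ← Finset.mul_sum, hsumδ, mul_zero]
    rw [hY1, hY2, hY3]
    ring
  have hDφ0 : Dφ 0 = 0 := by
    have e1 : ∑ σ, δb σ * Real.log (ψb σ) = 0 := by
      rw [Finset.sum_congr rfl fun σ (_ : σ ∈ Finset.univ) => mul_comm (δb σ) (Real.log (ψb σ))]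
      have hps := pairsum (fun σ => Real.log (ψb σ))
      rw [hps, hψbeq]
      ring
    have e2 : ∑ σ, (Real.log (m σ + 0 * δb σ) + 1) * δb σ = 0 := by
      have hps := pairsum (fun σ => Real.log (m σ + 0 * δb σ) + 1)
      have hm12 : m σ2 = m σ1 := by
        simp only [hmdef]; rw [heq2, hSeq, ← hpdef]
      rw [hps, hm12]
      ring
    have e4 : ∑ σ, ∑ σ', (Real.log (K σ σ' + 0 * δ σ σ') + 1) * δ σ σ'
        = ∑ σ, ∑ σ', δ σ σ' * Real.log (ψ σ σ') := by
      simp only [zero_mul, add_zero]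
      exact hT4
    simp only [hDφdef]
    rw [e1, e2, e4]
    ring
  -- second derivative
  set c : ℝ := ((d:ℝ) - 1) * (∑ σ, (m σ)⁻¹ * δb σ * δb σ)
      - ((d:ℝ)/2) * (∑ σ, ∑ σ', (K σ σ')⁻¹ * δ σ σ' * δ σ σ') with hcdef
  have hDφderiv : HasDerivAt Dφ c 0 := by
    have hA : HasDerivAt (fun η : ℝ => ∑ σ, (Real.log (m σ + η * δb σ) + 1) * δb σ)
        (∑ σ, (m σ)⁻¹ * δb σ * δb σ) 0 := by
      refine HasDerivAt.fun_sum fun σ _ => ?_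
      have h0 : (0:ℝ) < m σ + 0 * δb σ := by simpa using hmpos σ
      have := ((hasDerivAt_affine_log h0).add_const 1).mul_const (δb σ)
      simpa [mul_assoc] using this
    have hB : HasDerivAt
        (fun η : ℝ => ∑ σ, ∑ σ', (Real.log (K σ σ' + η * δ σ σ') + 1) * δ σ σ')
        (∑ σ, ∑ σ', (K σ σ')⁻¹ * δ σ σ' * δ σ σ') 0 := by
      refine HasDerivAt.fun_sum fun σ _ => HasDerivAt.fun_sum fun σ' _ => ?_
      have h0 : (0:ℝ) < K σ σ' + 0 * δ σ σ' := by simpa using hKpos σ σ'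
      have := ((hasDerivAt_affine_log h0).add_const 1).mul_const (δ σ σ')
      simpa [mul_assoc] using this
    rw [hDφdef]
    have hbuilt := (((hasDerivAt_const (0:ℝ) (∑ σ, δb σ * Real.log (ψb σ))).add
        (hA.const_mul ((d:ℝ) - 1))).add
        ((hasDerivAt_const (0:ℝ)
          (∑ σ, ∑ σ', δ σ σ' * Real.log (ψ σ σ'))).const_mul ((d:ℝ)/2))).sub
        (hB.const_mul ((d:ℝ)/2))
    exact hbuilt.congr_deriv (by rw [hcdef]; ring)
  -- evaluate the two quadratic sums
  have h1bp : (0:ℝ) < 1 + b * p := by nlinarith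
  have h12bp : (0:ℝ) < 1 + 2 * b * p := by nlinarith
  have hsum1 : ∑ σ, (m σ)⁻¹ * δb σ * δb σ
      = 2 * (1 + 2*b*p)^2 / (z * (p * (1 + b*p))) := by
    rw [sum_support_pair hne _ (fun σ hh1 hh2 => by rw [hδb0 σ hh1 hh2]; ring)]
    simp only [hmdef, hδbdef, he1, he2, hS, heq2, ← hpdef]
    field_simp [hp.ne', hz.ne', h1bp.ne']
    ring
  have hptws : ∀ σ σ', (K σ σ')⁻¹ * δ σ σ' * δ σ σ'
      = (ψ σ σ' * (e σ * e σ * (h σ)⁻¹) * h σ'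
        + (2 * (ψ σ σ' * e σ * e σ') + ψ σ σ' * h σ * (e σ' * e σ' * (h σ')⁻¹))) / z := by
    intro σ σ'
    exact ptws_helper (ψ σ σ') (h σ) (h σ') z (e σ) (e σ')
      (hψpos σ σ') (hpos σ) (hpos σ') hz
  have hs1 : ∑ σ, e σ * e σ * (h σ)⁻¹ = 2 / p := by
    rw [sum_support_pair hne _ (fun σ hh1 hh2 => by rw [he0 σ hh1 hh2]; ring)]
    rw [he1, he2, heq2, ← hpdef]
    field_simp [hp.ne']
    ring
  have hs3 : ∑ σ, (e σ * e σ * (h σ)⁻¹) * h σ = 2 := by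
    rw [sum_support_pair hne _ (fun σ hh1 hh2 => by rw [he0 σ hh1 hh2]; ring)]
    rw [he1, he2, heq2, ← hpdef]
    field_simp [hp.ne']
    ring
  have hs6 : ∑ σ, h σ * (e σ * e σ * (h σ)⁻¹) = 2 := by
    rw [Finset.sum_congr rfl fun σ (_ : σ ∈ Finset.univ) =>
      mul_comm (h σ) (e σ * e σ * (h σ)⁻¹)]
    exact hs3
  have hse : ∑ σ, e σ = 0 := by
    rw [sum_support_pair hne e he0, he1, he2]; ring
  have hse2 : ∑ σ, e σ * e σ = 2 := by
    rw [sum_support_pair hne _ (fun σ hh1 hh2 => by rw [he0 σ hh1 hh2]; ring)]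
    rw [he1, he2]; ring
  have hsum2 : ∑ σ, ∑ σ', (K σ σ')⁻¹ * δ σ σ' * δ σ σ'
      = ((2/p + b * 2) + (2 * (b * 2) + (2/p + b * 2))) / z := by
    simp only [hptws]
    simp only [← Finset.sum_div]
    congr 1
    rw [Finset.sum_congr rfl fun σ (_ : σ ∈ Finset.univ) => Finset.sum_add_distrib,
      Finset.sum_add_distrib]
    congr 1
    · have := psi_double β (fun σ => e σ * e σ * (h σ)⁻¹) h
      simp only [hψdef]
      rw [this, hs1, hsum, hs3]
      ring
    · rw [Finset.sum_congr rfl fun σ (_ : σ ∈ Finset.univ) => Finset.sum_add_distrib,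
        Finset.sum_add_distrib]
      congr 1
      · rw [Finset.sum_congr rfl fun σ (_ : σ ∈ Finset.univ) => (Finset.mul_sum _ _ _).symm,
          ← Finset.mul_sum]
        have := psi_double β e e
        simp only [hψdef]
        rw [this, hse, hse2]
        ring
      · have := psi_double β h (fun σ => e σ * e σ * (h σ)⁻¹)
        simp only [hψdef]
        rw [this, hs1, hsum, hs6]
        ring
  -- positivity of c
  have hd2 : (0:ℝ) < (d:ℝ) - 2 := by
    have : (3:ℝ) ≤ (d:ℝ) := by exact_mod_cast hd
    linarith
  have hkey : 1 < b * p * ((d:ℝ) - 2) := by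
    rw [div_div] at hgt
    have := (div_lt_iff₀ (mul_pos hb hd2)).1 hgt
    nlinarith
  have hc : c = 2 * (1 + 2*b*p) * (b * p * ((d:ℝ) - 2) - 1) / (z * p * (1 + b*p)) := by
    rw [hcdef, hsum1, hsum2]
    field_simp
    ring
  have hcpos : 0 < c := by
    rw [hc]
    apply div_pos
    · apply mul_pos (by nlinarith)
      linarith
    · exact mul_pos (mul_pos hz hp) h1bp
  -- conclude
  have hfinal : ∀ᶠ η in nhdsWithin (0:ℝ) (Set.Ioi 0), φ 0 < φ η :=
    localmax_aux φ Dφ ε c hε hcpos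
      (fun η hη => hφderiv η (abs_lt.2 ⟨hη.1, hη.2⟩)) hDφ0 hDφderiv
  have hK0 : (fun σ σ' => K σ σ' + (0:ℝ) * δ σ σ') = tensorPsi q ψ h := by
    funext σ σ'
    rw [← hKtensor]
    ring
  have hcurve : Tendsto (fun η : ℝ => fun σ σ' => K σ σ' + η * δ σ σ')
      (nhdsWithin 0 (Set.Ioi 0)) (nhdsWithin (tensorPsi q ψ h) (edgeSimplex q)) := by
    rw [tendsto_nhdsWithin_iff]
    constructor
    · have hc2 : Continuous (fun η : ℝ => fun σ σ' : Fin q => K σ σ' + η * δ σ σ') := by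
        refine continuous_pi fun σ => continuous_pi fun σ' => ?_
        fun_prop
      have h0 := hc2.tendsto 0
      have : Tendsto (fun η : ℝ => fun σ σ' : Fin q => K σ σ' + η * δ σ σ')
          (nhds 0) (nhds (tensorPsi q ψ h)) := by
        simpa only [hK0] using h0
      exact this.mono_left nhdsWithin_le_nhds
    · have habs : ∀ᶠ η : ℝ in nhdsWithin 0 (Set.Ioi 0), |η| < ε := by
        have hn : ∀ᶠ η : ℝ in nhds (0:ℝ), |η| < ε := by
          filter_upwards [Metric.ball_mem_nhds (0:ℝ) hε] with x hx
          simpa [Real.dist_eq] using hx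
        exact hn.filter_mono nhdsWithin_le_nhds
      filter_upwards [habs] with η hη
      exact hmem η hη
  have hev : ∀ᶠ η in nhdsWithin (0:ℝ) (Set.Ioi 0),
      edgePhi q d ψ ψb (fun σ σ' => K σ σ' + η * δ σ σ')
        ≤ edgePhi q d ψ ψb (tensorPsi q ψ h) := hcurve.eventually hmax
  obtain ⟨η, hle, hlt⟩ := (hev.and hfinal).exists
  simp only [hφdef] at hlt
  rw [hK0] at hlt
  exact absurd hle (not_le.2 hlt)

end
end

section
/- For the q-state Potts model with β, B ≥ 0, q ≥ 2 and d ≥ 4 even: if b° ∈ [0, 1] is any fixed point of the univariate map bp induced by the Bethe recursion on Δ̄, then the function b ↦ Ψ^vx(h_b, h_{b°}, …, h_{b°}) / Ψ^e(h_b, h_{b°}, …, h_{b°}) is constant for b ∈ [0, 1]. -/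
open Finset Filter MeasureTheory

noncomputable section

/-! ## Auxiliary lemmas for Statement 16 -/

lemma pottsAux_psi_eq (q : ℕ) (β : ℝ) (σ σ' : Fin q) :
    pottsPsi q β σ σ' = if σ = σ' then Real.exp β else 1 := by
  unfold pottsPsi; split_ifs <;> simp

lemma pottsAux_psi_symm (q : ℕ) (β : ℝ) (σ σ' : Fin q) :
    pottsPsi q β σ σ' = pottsPsi q β σ' σ := by
  rw [pottsAux_psi_eq, pottsAux_psi_eq]
  by_cases h : σ = σ'
  · simp [h]
  · rw [if_neg h, if_neg fun hh => h hh.symm]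

lemma pottsAux_psi_ge_one (q : ℕ) {β : ℝ} (hβ : 0 ≤ β) (σ σ' : Fin q) :
    1 ≤ pottsPsi q β σ σ' := by
  unfold pottsPsi
  calc (1:ℝ) = Real.exp 0 := Real.exp_zero.symm
  _ ≤ _ := Real.exp_le_exp.mpr (by split_ifs <;> simp [hβ])

lemma pottsAux_psib_eq (q : ℕ) (B : ℝ) (σ : Fin q) :
    pottsPsib q B σ = if σ.1 = 0 then Real.exp B else 1 := by
  unfold pottsPsib; split_ifs <;> simp

lemma pottsAux_hb_nonneg (q : ℕ) (hq : 2 ≤ q) {b : ℝ} (hb : b ∈ Set.Icc (0:ℝ) 1)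
    (σ : Fin q) : 0 ≤ pottsHb q b σ := by
  obtain ⟨h0, h1⟩ := hb
  have hQ : (2:ℝ) ≤ (q:ℝ) := by exact_mod_cast hq
  unfold pottsHb
  split_ifs
  · apply div_nonneg _ (by linarith); nlinarith
  · apply div_nonneg _ (by linarith); linarith

lemma pottsAux_sum_ite (q : ℕ) (hq : 2 ≤ q) (a c : ℝ) :
    ∑ σ : Fin q, (if σ.1 = 0 then a else c) = a + ((q:ℝ) - 1) * c := by
  have h0 : 0 < q := by omega
  have he : ∀ σ : Fin q, (if σ.1 = 0 then a else c)
      = c + (if σ = ⟨0, h0⟩ then a - c else 0) := by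
    intro σ
    by_cases h : σ = ⟨0, h0⟩
    · subst h; simp
    · rw [if_neg (fun hh => h (Fin.ext hh)), if_neg h, add_zero]
  rw [Finset.sum_congr rfl fun σ _ => he σ, Finset.sum_add_distrib,
    Finset.sum_const, Finset.sum_ite_eq' Finset.univ, if_pos (Finset.mem_univ _)]
  simp [Finset.card_univ, nsmul_eq_mul]
  ring

lemma pottsAux_hb_sum (q : ℕ) (hq : 2 ≤ q) (b : ℝ) :
    ∑ σ : Fin q, pottsHb q b σ = 1 := by
  have hQ : (2:ℝ) ≤ (q:ℝ) := by exact_mod_cast hq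
  have hq0 : (q:ℝ) ≠ 0 := by linarith
  simp only [pottsHb]
  rw [pottsAux_sum_ite q hq]
  field_simp
  ring

lemma pottsAux_prod_ite (d : ℕ) (hd : 0 < d) (x y : ℝ) :
    ∏ j : Fin d, (if j = (⟨0, hd⟩ : Fin d) then x else y) = x * y ^ (d - 1) := by
  rw [← Finset.mul_prod_erase Finset.univ _ (Finset.mem_univ (⟨0, hd⟩ : Fin d)),
    if_pos rfl]
  congr 1
  rw [Finset.prod_congr rfl (fun j hj => if_neg (Finset.ne_of_mem_erase hj)),
    Finset.prod_const, Finset.card_erase_of_mem (Finset.mem_univ _), Finset.card_univ,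
    Fintype.card_fin]

lemma pottsAux_ratio (Z W T1 T2 : ℝ) (h1 : T1 ≠ 0) (h2 : T2 ≠ 0) :
    Z * T1 / (T1 * W) = Z * T2 / (T2 * W) := by
  rw [mul_comm Z T1, mul_comm Z T2, mul_div_mul_left _ _ h1, mul_div_mul_left _ _ h2]

set_option maxHeartbeats 1600000 in
lemma pottsAux_key (q d : ℕ) (hq : 2 ≤ q) (hd : 4 ≤ d)
    (β B : ℝ) (hβ : 0 ≤ β) (hB : 0 ≤ B)
    (b0 : ℝ) (hb0 : b0 ∈ Set.Icc (0:ℝ) 1) (hfix : pottsBp q d β B b0 = b0)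
    (b : ℝ) (hb : b ∈ Set.Icc (0:ℝ) 1) :
    ∃ T : ℝ, 0 < T ∧
      PsiVx q d (pottsPsi q β) (pottsPsib q B)
          (fun j : Fin d => if j = ⟨0, lt_of_lt_of_le (by norm_num) hd⟩ then pottsHb q b else pottsHb q b0)
        = (∑ σ, pottsPsib q B σ * (∑ σ', pottsPsi q β σ σ' * pottsHb q b0 σ') ^ (d-1)) * T ∧
      PsiE q d (pottsPsi q β)
          (fun j : Fin d => if j = ⟨0, lt_of_lt_of_le (by norm_num) hd⟩ then pottsHb q b else pottsHb q b0)
        = T * (∑ σ, ∑ σ', pottsPsi q β σ σ' * pottsHb q b0 σ * pottsHb q b0 σ') ^ (d/2 - 1) := by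
  have hd0 : 0 < d := by omega
  have hd2 : 0 < d / 2 := by omega
  obtain ⟨hb0l, hb0r⟩ := hb0
  have hQ : (2:ℝ) ≤ (q:ℝ) := by exact_mod_cast hq
  have hQ0 : (0:ℝ) < q := by linarith
  have hexp : (1:ℝ) ≤ Real.exp β := by
    rw [← Real.exp_zero]; exact Real.exp_le_exp.mpr hβ
  have hexpB : (1:ℝ) ≤ Real.exp B := by
    rw [← Real.exp_zero]; exact Real.exp_le_exp.mpr hB
  -- the one-spin marginal factor m
  have hm : ∀ σ : Fin q, (∑ σ', pottsPsi q β σ σ' * pottsHb q b0 σ')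
      = 1 + (Real.exp β - 1) * pottsHb q b0 σ := by
    intro σ
    have he : ∀ σ' : Fin q, pottsPsi q β σ σ' * pottsHb q b0 σ'
        = pottsHb q b0 σ' + (if σ' = σ then (Real.exp β - 1) * pottsHb q b0 σ else 0) := by
      intro σ'
      by_cases h : σ' = σ
      · subst h; rw [pottsAux_psi_eq, if_pos rfl, if_pos rfl]; ring
      · rw [pottsAux_psi_eq, if_neg fun hh => h hh.symm, if_neg h, one_mul, add_zero]
    rw [Finset.sum_congr rfl fun σ' _ => he σ', Finset.sum_add_distrib,
      pottsAux_hb_sum q hq, Finset.sum_ite_eq' Finset.univ, if_pos (Finset.mem_univ _)]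
  obtain ⟨Fa, hFa⟩ : ∃ x : ℝ,
      x = Real.exp B * (1 + (Real.exp β - 1) * ((1 + ((q:ℝ)-1)*b0)/q)) ^ (d-1) := ⟨_, rfl⟩
  obtain ⟨Fc, hFc⟩ : ∃ x : ℝ,
      x = (1 + (Real.exp β - 1) * ((1-b0)/q)) ^ (d-1) := ⟨_, rfl⟩
  have hf : ∀ σ : Fin q,
      pottsPsib q B σ * (∑ σ', pottsPsi q β σ σ' * pottsHb q b0 σ') ^ (d-1)
      = if σ.1 = 0 then Fa else Fc := by
    intro σ
    rw [hm σ, pottsAux_psib_eq]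
    by_cases h : σ.1 = 0 <;> simp [pottsHb, h, hFa, hFc]
  have hM1 : (1:ℝ) ≤ 1 + (Real.exp β - 1) * ((1 + ((q:ℝ)-1)*b0)/q) := by
    have h1 : (0:ℝ) ≤ (1 + ((q:ℝ)-1)*b0)/q := by
      apply div_nonneg _ (by linarith); nlinarith
    nlinarith
  have hM2 : (1:ℝ) ≤ 1 + (Real.exp β - 1) * ((1-b0)/q) := by
    have h1 : (0:ℝ) ≤ (1-b0)/q := by
      apply div_nonneg _ (by linarith); linarith
    nlinarith
  have hFa1 : (1:ℝ) ≤ Fa := by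
    rw [hFa]
    have := one_le_pow₀ hM1 (n := d-1)
    nlinarith
  have hFc1 : (1:ℝ) ≤ Fc := by
    rw [hFc]
    exact one_le_pow₀ hM2
  have hZeq : (∑ σ, pottsPsib q B σ * (∑ σ', pottsPsi q β σ σ' * pottsHb q b0 σ') ^ (d-1))
      = Fa + ((q:ℝ)-1) * Fc := by
    rw [Finset.sum_congr rfl fun σ _ => hf σ, pottsAux_sum_ite q hq]
  have hZpos : (0:ℝ) < Fa + ((q:ℝ)-1) * Fc := by nlinarith
  -- exploit the fixed-point equation
  have hfilter : Finset.univ.filter (fun σ : Fin q => σ.1 = 0)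
      = {(⟨0, by omega⟩ : Fin q)} := by
    ext σ; simp [Fin.ext_iff]
  unfold pottsBp at hfix
  rw [hfilter, Finset.sum_singleton] at hfix
  unfold BPmap at hfix
  rw [(hf ⟨0, by omega⟩).trans (if_pos rfl), hZeq] at hfix
  have hfix' : (q:ℝ) * Fa - (Fa + ((q:ℝ)-1) * Fc)
      = b0 * (((q:ℝ)-1) * (Fa + ((q:ℝ)-1) * Fc)) := by
    have hQ1 : (q:ℝ) - 1 ≠ 0 := by linarith
    field_simp [hZpos.ne'] at hfix
    linarith [hfix]
  have h1 : Fa = (Fa + ((q:ℝ)-1) * Fc) * ((1 + ((q:ℝ)-1)*b0)/q) := by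
    field_simp
    nlinarith [hfix']
  have h2 : Fc = (Fa + ((q:ℝ)-1) * Fc) * ((1-b0)/q) := by
    have hQ1 : (0:ℝ) < (q:ℝ) - 1 := by linarith
    have h2' : ((q:ℝ)-1) * ((q:ℝ) * Fc)
        = ((q:ℝ)-1) * ((1-b0) * (Fa + ((q:ℝ)-1) * Fc)) := by
      linear_combination -hfix'
    have h2'' := mul_left_cancel₀ hQ1.ne' h2'
    field_simp
    linarith [h2'']
  have hfσ : ∀ σ : Fin q,
      pottsPsib q B σ * (∑ σ', pottsPsi q β σ σ' * pottsHb q b0 σ') ^ (d-1)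
      = (Fa + ((q:ℝ)-1) * Fc) * pottsHb q b0 σ := by
    intro σ
    rw [hf σ]
    unfold pottsHb
    by_cases h : σ.1 = 0
    · rw [if_pos h, if_pos h]; exact h1
    · rw [if_neg h, if_neg h]; exact h2
  -- the common factor T
  refine ⟨∑ σ, ∑ σ', pottsPsi q β σ σ' * pottsHb q b σ * pottsHb q b0 σ', ?_, ?_, ?_⟩
  · -- positivity of T
    have hone : ∑ σ : Fin q, ∑ σ' : Fin q, pottsHb q b σ * pottsHb q b0 σ' = 1 := by
      rw [← Finset.sum_mul_sum, pottsAux_hb_sum q hq, pottsAux_hb_sum q hq, one_mul]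
    have hle : (1:ℝ) ≤ ∑ σ, ∑ σ', pottsPsi q β σ σ' * pottsHb q b σ * pottsHb q b0 σ' := by
      rw [← hone]
      refine Finset.sum_le_sum fun σ _ => Finset.sum_le_sum fun σ' _ => ?_
      have hx : 0 ≤ pottsHb q b σ * pottsHb q b0 σ' :=
        mul_nonneg (pottsAux_hb_nonneg q hq hb σ) (pottsAux_hb_nonneg q hq ⟨hb0l, hb0r⟩ σ')
      nlinarith [pottsAux_psi_ge_one q hβ σ σ']
    linarith
  · -- PsiVx
    have hinner : ∀ (σ : Fin q) (j : Fin d),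
        (∑ σ', pottsPsi q β σ σ' *
          (if j = (⟨0, hd0⟩ : Fin d) then pottsHb q b else pottsHb q b0) σ')
        = if j = (⟨0, hd0⟩ : Fin d) then (∑ σ', pottsPsi q β σ σ' * pottsHb q b σ')
          else (∑ σ', pottsPsi q β σ σ' * pottsHb q b0 σ') := by
      intro σ j; by_cases h : j = (⟨0, hd0⟩ : Fin d) <;> simp [h]
    have hswap : ∑ σ : Fin q, pottsHb q b0 σ * (∑ σ', pottsPsi q β σ σ' * pottsHb q b σ')
        = ∑ σ : Fin q, ∑ σ' : Fin q,
            pottsPsi q β σ σ' * pottsHb q b σ * pottsHb q b0 σ' := by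
      simp_rw [Finset.mul_sum]
      rw [Finset.sum_comm]
      refine Finset.sum_congr rfl fun σ _ => Finset.sum_congr rfl fun σ' _ => ?_
      rw [pottsAux_psi_symm q β σ' σ]
      ring
    unfold PsiVx
    rw [hZeq]
    calc ∑ σ, pottsPsib q B σ * ∏ j : Fin d, (∑ σ', pottsPsi q β σ σ' *
            (if j = (⟨0, hd0⟩ : Fin d) then pottsHb q b else pottsHb q b0) σ')
        = ∑ σ, ((Fa + ((q:ℝ)-1) * Fc) * pottsHb q b0 σ) *
            (∑ σ', pottsPsi q β σ σ' * pottsHb q b σ') := by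
          refine Finset.sum_congr rfl fun σ _ => ?_
          rw [Finset.prod_congr rfl fun j _ => hinner σ j, pottsAux_prod_ite d hd0,
            ← hfσ σ]
          ring
      _ = (Fa + ((q:ℝ)-1) * Fc) * ∑ σ, pottsHb q b0 σ *
            (∑ σ', pottsPsi q β σ σ' * pottsHb q b σ') := by
          rw [Finset.mul_sum]
          exact Finset.sum_congr rfl fun σ _ => by ring
      _ = (Fa + ((q:ℝ)-1) * Fc) *
            ∑ σ, ∑ σ', pottsPsi q β σ σ' * pottsHb q b σ * pottsHb q b0 σ' := by
          rw [hswap]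
  · -- PsiE
    unfold PsiE
    have hfac : ∀ j : Fin (d/2),
        (∑ σ, ∑ σ', pottsPsi q β σ σ' *
          (if (⟨2 * j.1, by have := j.2; omega⟩ : Fin d) = ⟨0, hd0⟩
            then pottsHb q b else pottsHb q b0) σ *
          (if (⟨2 * j.1 + 1, by have := j.2; omega⟩ : Fin d) = ⟨0, hd0⟩
            then pottsHb q b else pottsHb q b0) σ')
        = if j = (⟨0, hd2⟩ : Fin (d/2))
          then (∑ σ, ∑ σ', pottsPsi q β σ σ' * pottsHb q b σ * pottsHb q b0 σ')
          else (∑ σ, ∑ σ', pottsPsi q β σ σ' * pottsHb q b0 σ * pottsHb q b0 σ') := by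
      intro j
      by_cases h : j = (⟨0, hd2⟩ : Fin (d/2))
      · subst h
        rw [if_pos rfl]
        refine Finset.sum_congr rfl fun σ _ => Finset.sum_congr rfl fun σ' _ => ?_
        rw [if_pos (by simp [Fin.ext_iff]), if_neg (by simp [Fin.ext_iff])]
      · have hj : j.1 ≠ 0 := fun hh => h (Fin.ext hh)
        rw [if_neg h]
        refine Finset.sum_congr rfl fun σ _ => Finset.sum_congr rfl fun σ' _ => ?_
        rw [if_neg (by simp only [Fin.mk.injEq]; omega),
          if_neg (by simp only [Fin.mk.injEq]; omega)]
    rw [Finset.prod_congr rfl fun j _ => hfac j, pottsAux_prod_ite (d/2) hd2]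

/-- if `b°` is a fixed point of the univariate Potts BP map, then
`b ↦ Ψ^vx(h_b, h_{b°}, …, h_{b°}) / Ψ^e(h_b, h_{b°}, …, h_{b°})` is constant on `[0,1]`. -/
theorem potts_psi_ratio_constant
    (q d : ℕ) (hq : 2 ≤ q) (hd : 4 ≤ d) (hde : Even d)
    (β B : ℝ) (hβ : 0 ≤ β) (hB : 0 ≤ B)
    (b0 : ℝ) (hb0 : b0 ∈ Set.Icc (0 : ℝ) 1) (hfix : pottsBp q d β B b0 = b0) :
    ∀ b1 ∈ Set.Icc (0 : ℝ) 1, ∀ b2 ∈ Set.Icc (0 : ℝ) 1,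
      PsiVx q d (pottsPsi q β) (pottsPsib q B)
          (fun j : Fin d => if j = ⟨0, by omega⟩ then pottsHb q b1 else pottsHb q b0) /
        PsiE q d (pottsPsi q β)
          (fun j : Fin d => if j = ⟨0, by omega⟩ then pottsHb q b1 else pottsHb q b0) =
      PsiVx q d (pottsPsi q β) (pottsPsib q B)
          (fun j : Fin d => if j = ⟨0, by omega⟩ then pottsHb q b2 else pottsHb q b0) /
        PsiE q d (pottsPsi q β)
          (fun j : Fin d => if j = ⟨0, by omega⟩ then pottsHb q b2 else pottsHb q b0) := by
  intro b1 hb1 b2 hb2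
  obtain ⟨T1, hT1, hV1, hE1⟩ := pottsAux_key q d hq hd β B hβ hB b0 hb0 hfix b1 hb1
  obtain ⟨T2, hT2, hV2, hE2⟩ := pottsAux_key q d hq hd β B hβ hB b0 hb0 hfix b2 hb2
  rw [hV1, hE1, hV2, hE2]
  exact pottsAux_ratio _ _ _ _ hT1.ne' hT2.ne'


end
end
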